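/- arXiv:2310.08227 — 3 statements merged into one kernel-verified Lean document; each statement's English description precedes it below -/
import Mathlib

section
/- Let ν₁, ν₂ ∈ P(E) with ν₁(‖·‖^p) < ∞ and ν₂(‖·‖^p) < ∞, where p ≥ 1 and γ ∈ (0,1]. Then for every f ∈ C_{p,γ} one has |ν₁(f) − ν₂(f)| ≤ ‖f‖_{p,γ} · (1 + ν₁(‖·‖^p) + ν₂(‖·‖^p))^{1/2} · (W₂(ν₁,ν₂))^γ. -/
open MeasureTheory Filter Set Topology ENNReal
noncomputable section

namespace PaperProb

variable {E Ω : Type*}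

/-! ### Test function spaces `C_{p,γ}` -/

section QuasiMetric
variable [NormedAddCommGroup E]

/-- the quasi-metric `d_{p,γ}` -/
def dQ (p γ : ℝ) (u₁ u₂ : E) : ℝ :=
  min 1 (‖u₁ - u₂‖ ^ γ) * (1 + ‖u₁‖ ^ p + ‖u₂‖ ^ p) ^ ((1 : ℝ) / 2)

def wQuot (p : ℝ) (f : E → ℝ) (u : E) : ℝ :=
  |f u| / (1 + ‖u‖ ^ (p / 2))

def hQuot (p γ : ℝ) (f : E → ℝ) (pr : E × E) : ℝ :=
  |f pr.1 - f pr.2| / dQ p γ pr.1 pr.2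

/-- membership in `C_{p,γ}(S;ℝ)` -/
def MemC (S : Set E) (p γ : ℝ) (f : E → ℝ) : Prop :=
  ContinuousOn f S ∧ BddAbove (wQuot p f '' S) ∧ BddAbove (hQuot p γ f '' (S ×ˢ S))

/-- the norm `‖f‖_{p,γ}` of `C_{p,γ}(S;ℝ)` -/
def CNorm (S : Set E) (p γ : ℝ) (f : E → ℝ) : ℝ :=
  sSup (wQuot p f '' S) + sSup (hQuot p γ f '' (S ×ˢ S))

end QuasiMetric

/-! ### bounded Wasserstein distance `W₂` -/

section Wasserstein
variable [NormedAddCommGroup E] [MeasurableSpace E]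

def IsCoupling (ν₁ ν₂ : Measure E) (π : Measure (E × E)) : Prop :=
  IsProbabilityMeasure π ∧ π.map Prod.fst = ν₁ ∧ π.map Prod.snd = ν₂

def W2 (ν₁ ν₂ : Measure E) : ℝ :=
  (⨅ π : {π : Measure (E × E) // IsCoupling ν₁ ν₂ π},
      ∫ pr : E × E, min 1 (‖pr.1 - pr.2‖ ^ 2) ∂π.1) ^ ((1 : ℝ) / 2)

end Wasserstein

/-- boundedness of a test functional -/
def Bdd {α : Type*} (f : α → ℝ) : Prop := ∃ C, ∀ u, |f u| ≤ C

/-! ### Markov semigroups and invariant measures -/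

section Markov
variable [MeasurableSpace Ω]

/-- the semigroup `P_t f (x) = 𝔼[f(X^x_t)]` -/
def Pt (ℙ : Measure Ω) (X : E → ℝ → Ω → E) (t : ℝ) (f : E → ℝ) (x : E) : ℝ :=
  ∫ ω, f (X x t ω) ∂ℙ

/-- the numerical semigroup `P^Δ_{t_k} f (x) = 𝔼[f(Y^{x,Δ}_{t_k})]` -/
def PD (ℙ : Measure Ω) (Y : ℝ × ℝ → E → ℕ → Ω → E) (Δ : ℝ × ℝ) (k : ℕ)
    (f : E → ℝ) (x : E) : ℝ :=
  ∫ ω, f (Y Δ x k ω) ∂ℙ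

/-- invariant probability measure of the continuous-time Markov family -/
def IsInvMeasure [MeasurableSpace E] (ℙ : Measure Ω) (X : E → ℝ → Ω → E)
    (μ : Measure E) : Prop :=
  IsProbabilityMeasure μ ∧
    ∀ t : ℝ, 0 ≤ t → ∀ f : E → ℝ, Measurable f → Bdd f →
      ∫ x, Pt ℙ X t f x ∂μ = ∫ x, f x ∂μ

/-- invariant probability measure (supported on `S = E^h`) of the numerical chain -/
def IsInvMeasureD [MeasurableSpace E] (ℙ : Measure Ω) (Y : ℝ × ℝ → E → ℕ → Ω → E)
    (S : Set E) (Δ : ℝ × ℝ) (ν : Measure E) : Prop :=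
  IsProbabilityMeasure ν ∧ ν Sᶜ = 0 ∧
    ∀ k : ℕ, ∀ f : E → ℝ, Measurable f → Bdd f →
      ∫ x, PD ℙ Y Δ k f x ∂ν = ∫ x, f x ∂ν

end Markov

/-- admissible step sizes `Δ = (h,τ)` -/
def Adm (ht τt : ℝ) (Δ : ℝ × ℝ) : Prop :=
  Δ.1 ∈ Set.Icc (0 : ℝ) ht ∧ Δ.2 ∈ Set.Ioc (0 : ℝ) τt

/-! ### Assumptions of the paper -/

/-- Assumption 1: time-homogeneous Markov family with moment bound and contraction. -/
structure Assumption1 [NormedAddCommGroup E] [NormedSpace ℝ E] [MeasurableSpace E]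
    [BorelSpace E] {mΩ : MeasurableSpace Ω} (ℙ : Measure Ω) (ℱ : Filtration ℝ mΩ)
    (X : E → ℝ → Ω → E) (r rt γ₁ β L₁ L₂ : ℝ) (ρ : ℝ → ℝ) : Prop where
  prob : IsProbabilityMeasure ℙ
  init : ∀ x ω, X x 0 ω = x
  jmeas : ∀ t : ℝ, Measurable fun p : E × Ω => X p.1 t p.2
  pathMeas : ∀ x ω, Measurable fun t : ℝ => X x t ω
  adapted : ∀ x, ∀ t : ℝ, 0 ≤ t → Measurable[ℱ t] (X x t)
  markov : ∀ f : E → ℝ, Measurable f → Bdd f → ∀ x, ∀ s t : ℝ, 0 ≤ s → 0 ≤ t →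
    (ℙ[(fun ω => f (X x (s + t) ω))|ℱ s]) =ᵐ[ℙ] fun ω => ∫ ω', f (X (X x s ω) t ω') ∂ℙ
  hr : 2 ≤ r
  hrt : 1 ≤ rt
  hL₁ : 0 < L₁
  moment : ∀ x, ∀ t : ℝ, 0 ≤ t →
    ∫⁻ ω, (‖X x t ω‖₊ : ℝ≥0∞) ^ r ∂ℙ ≤ ENNReal.ofReal (L₁ * (1 + ‖x‖ ^ (rt * r)))
  hγ₁ : γ₁ ∈ Set.Ioc (0 : ℝ) 1
  hβ : β ∈ Set.Icc (0 : ℝ) (r - 1)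
  hL₂ : 0 < L₂
  ρ_cont : Continuous ρ
  ρ_nonneg : ∀ t, 0 ≤ ρ t
  ρ_int : IntegrableOn (fun t => ρ t ^ γ₁) (Set.Ici (0 : ℝ))
  contract : ∀ x y, ∀ t : ℝ, 0 ≤ t →
    (∫⁻ ω, (‖X x t ω - X y t ω‖₊ : ℝ≥0∞) ^ (2 : ℝ) ∂ℙ) ^ ((1 : ℝ) / 2) ≤
      ENNReal.ofReal (L₂ * ‖x - y‖ * (1 + ‖x‖ ^ β + ‖y‖ ^ β) * ρ t)

/-- Assumption 2: numerical discretization as a time-homogeneous Markov chain with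
uniform moment bound and strong-mixing-type contraction. -/
structure Assumption2 [NormedAddCommGroup E] [NormedSpace ℝ E] [MeasurableSpace E]
    [BorelSpace E] {mΩ : MeasurableSpace Ω} (ℙ : Measure Ω) (ℱ : Filtration ℝ mΩ)
    (Eh : ℝ → Set E) (Y : ℝ × ℝ → E → ℕ → Ω → E)
    (ht τt q qt γ₂ κ L₃ L₄ : ℝ) (ρD : ℝ × ℝ → ℝ → ℝ) : Prop where
  prob : IsProbabilityMeasure ℙ
  hht : ht ∈ Set.Icc (0 : ℝ) 1
  hτt : τt ∈ Set.Ioc (0 : ℝ) 1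
  hE0 : Eh 0 = Set.univ
  init : ∀ Δ, Adm ht τt Δ → ∀ x ∈ Eh Δ.1, ∀ ω, Y Δ x 0 ω = x
  stateMem : ∀ Δ, Adm ht τt Δ → ∀ x ∈ Eh Δ.1, ∀ (k : ℕ) ω, Y Δ x k ω ∈ Eh Δ.1
  jmeas : ∀ Δ, ∀ k : ℕ, Measurable fun p : E × Ω => Y Δ p.1 k p.2
  adapted : ∀ Δ, Adm ht τt Δ → ∀ x ∈ Eh Δ.1, ∀ k : ℕ,
    Measurable[ℱ ((k : ℝ) * Δ.2)] (Y Δ x k)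
  markov : ∀ Δ, Adm ht τt Δ → ∀ x ∈ Eh Δ.1, ∀ f : E → ℝ, Measurable f → Bdd f →
    ∀ j k : ℕ,
      (ℙ[(fun ω => f (Y Δ x (j + k) ω))|ℱ ((j : ℝ) * Δ.2)]) =ᵐ[ℙ]
        fun ω => ∫ ω', f (Y Δ (Y Δ x j ω) k ω') ∂ℙ
  hq : 2 ≤ q
  hqt : 1 ≤ qt
  hL₃ : 0 < L₃
  moment : ∀ Δ, Adm ht τt Δ → ∀ x ∈ Eh Δ.1, ∀ k : ℕ,
    ∫⁻ ω, (‖Y Δ x k ω‖₊ : ℝ≥0∞) ^ q ∂ℙ ≤ ENNReal.ofReal (L₃ * (1 + ‖x‖ ^ (qt * q)))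
  hγ₂ : γ₂ ∈ Set.Ioc (0 : ℝ) 1
  hκ : κ ∈ Set.Icc (0 : ℝ) (q - 1)
  hL₄ : 0 < L₄
  ρD_nonneg : ∀ Δ t, 0 ≤ ρD Δ t
  ρD_sum : ∃ B : ℝ, ∀ Δ, Adm ht τt Δ →
    Summable (fun k : ℕ => ρD Δ ((k : ℝ) * Δ.2) ^ γ₂) ∧
      Δ.2 * ∑' k : ℕ, ρD Δ ((k : ℝ) * Δ.2) ^ γ₂ ≤ B
  contract : ∀ Δ, Adm ht τt Δ → ∀ x ∈ Eh Δ.1, ∀ y ∈ Eh Δ.1, ∀ k : ℕ,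
    (∫⁻ ω, (‖Y Δ x k ω - Y Δ y k ω‖₊ : ℝ≥0∞) ^ (2 : ℝ) ∂ℙ) ^ ((1 : ℝ) / 2) ≤
      ENNReal.ofReal (L₄ * ‖x - y‖ * (1 + ‖x‖ ^ κ + ‖y‖ ^ κ) * ρD Δ ((k : ℝ) * Δ.2))

/-- Assumption 3: uniform-in-time strong convergence of order `α` of the discretization
(started at the discretized initial datum `xh h` of `x`). -/
structure Assumption3 [NormedAddCommGroup E] [MeasurableSpace E]
    {mΩ : MeasurableSpace Ω} (ℙ : Measure Ω)
    (X : E → ℝ → Ω → E) (Y : ℝ × ℝ → E → ℕ → Ω → E) (Eh : ℝ → Set E)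
    (ht τt rt qt : ℝ) (x : E) (xh : ℝ → E) (α₁ α₂ L₅ : ℝ) : Prop where
  hα₁ : 0 < α₁
  hα₂ : 0 < α₂
  hL₅ : 0 < L₅
  xh_mem : ∀ h : ℝ, h ∈ Set.Icc (0 : ℝ) ht → xh h ∈ Eh h
  xh_eq : ∀ h : ℝ, x ∈ Eh h → xh h = x
  conv : ∀ Δ, Adm ht τt Δ → ∀ t : ℝ, 0 ≤ t →
    (∫⁻ ω, (‖X x t ω - Y Δ (xh Δ.1) ⌊t / Δ.2⌋₊ ω‖₊ : ℝ≥0∞) ^ (2 : ℝ) ∂ℙ) ^ ((1 : ℝ) / 2) ≤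
      ENNReal.ofReal (L₅ * (1 + ‖x‖ ^ (max rt qt)) * (Δ.1 ^ α₁ + Δ.2 ^ α₂))

/-! ### the discrete martingale and related objects -/

/-- the filtration `{F_{t_k}}_{k∈ℕ}` -/
def natFiltration {mΩ : MeasurableSpace Ω} (ℱ : Filtration ℝ mΩ) (τ : ℝ) (hτ : 0 ≤ τ) :
    Filtration ℕ mΩ where
  seq k := ℱ ((k : ℝ) * τ)
  mono' := fun _ _ hij =>
    ℱ.mono (mul_le_mul_of_nonneg_right (by exact_mod_cast hij) hτ)
  le' k := ℱ.le _

/-- the discrete martingale `M^{x^h,Δ}_k` (here `m` stands for `μ^Δ(f)`) -/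
def Mart [MeasurableSpace Ω] (ℙ : Measure Ω) (Y : ℝ × ℝ → E → ℕ → Ω → E)
    (Δ : ℝ × ℝ) (f : E → ℝ) (m : ℝ) (xh : E) (k : ℕ) (ω : Ω) : ℝ :=
  Δ.2 * ∑ i ∈ Finset.range k, (f (Y Δ xh i ω) - m) +
    Δ.2 * ∑' i : ℕ, (PD ℙ Y Δ i f (Y Δ xh k ω) - m) -
    Δ.2 * ∑' i : ℕ, (PD ℙ Y Δ i f xh - m)

/-- the martingale difference sequence `Z^{x^h,Δ}_k` -/
def Zseq [MeasurableSpace Ω] (ℙ : Measure Ω) (Y : ℝ × ℝ → E → ℕ → Ω → E)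
    (Δ : ℝ × ℝ) (f : E → ℝ) (m : ℝ) (xh : E) (k : ℕ) (ω : Ω) : ℝ :=
  if k = 0 then 0 else Mart ℙ Y Δ f m xh k ω - Mart ℙ Y Δ f m xh (k - 1) ω

/-- the conditional-variance function `H^Δ` -/
def Hfun [MeasurableSpace Ω] (ℙ : Measure Ω) (Y : ℝ × ℝ → E → ℕ → Ω → E)
    (Δ : ℝ × ℝ) (f : E → ℝ) (m : ℝ) (u : E) : ℝ :=
  -(Δ.2 ^ 2) * |f u - m| ^ 2 +
    Δ.2 ^ 2 * ∫ ω, |∑' i : ℕ, (PD ℙ Y Δ i f (Y Δ u 1 ω) - m)| ^ 2 ∂ℙ -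
    Δ.2 ^ 2 * |∑' i : ℕ, (PD ℙ Y Δ i f u - m)| ^ 2 +
    2 * Δ.2 ^ 2 * (f u - m) * ∑' i : ℕ, (PD ℙ Y Δ i f u - m)


/-! ### auxiliary lemmas for STATEMENT 0 -/

private lemma aux_min_sq {t γ : ℝ} (ht : 0 ≤ t) (hγ0 : 0 < γ) (hγ1 : γ ≤ 1) :
    (min 1 (t ^ γ)) ^ (2:ℝ) = (min 1 (t ^ (2:ℕ))) ^ γ := by
  rcases le_total t 1 with h | h
  · rw [min_eq_right (Real.rpow_le_one ht h hγ0.le), min_eq_right (pow_le_one₀ ht h),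
      ← Real.rpow_natCast t 2, ← Real.rpow_mul ht, ← Real.rpow_mul ht]
    ring_nf
  · rw [min_eq_left, min_eq_left, Real.one_rpow, Real.one_rpow]
    · exact one_le_pow₀ h
    · calc (1:ℝ) = 1 ^ γ := (Real.one_rpow γ).symm
        _ ≤ t ^ γ := Real.rpow_le_rpow zero_le_one h hγ0.le

private lemma aux_limit {A K B c : ℝ} (hK : 0 ≤ K) (hB : 0 ≤ B) (hc : 0 < c)
    (h : ∀ ε : ℝ, 0 < ε → A ≤ K * (B + ε) ^ c) : A ≤ K * B ^ c := by
  have h1 : Tendsto (fun ε : ℝ => B + ε) (𝓝[>] 0) (𝓝 B) := by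
    have h0 : Tendsto (fun ε : ℝ => B + ε) (𝓝 0) (𝓝 B) := by
      simpa using ((continuous_add_left B).tendsto (0:ℝ))
    exact h0.mono_left nhdsWithin_le_nhds
  have h2 : ContinuousAt (fun t : ℝ => K * t ^ c) B :=
    continuousAt_const.mul (Real.continuousAt_rpow_const B c (Or.inr hc.le))
  exact ge_of_tendsto (h2.tendsto.comp h1)
    (eventually_nhdsWithin_of_forall fun ε hε => h ε hε)

private lemma aux_jensen {α : Type*} [MeasurableSpace α] [TopologicalSpace α]
    [OpensMeasurableSpace α] (μ : Measure α) [IsProbabilityMeasure μ]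
    {g : α → ℝ} (hg : Continuous g) (h0 : ∀ x, 0 ≤ g x) (h1 : ∀ x, g x ≤ 1)
    {γ : ℝ} (hγ0 : 0 < γ) (hγ1 : γ ≤ 1) :
    ∫ x, g x ^ γ ∂μ ≤ (∫ x, g x ∂μ) ^ γ := by
  rcases eq_or_lt_of_le hγ1 with heq | hlt
  · subst heq; simp [Real.rpow_one]
  have hpq : Real.HolderConjugate (1/γ) (1/(1-γ)) := Real.holderConjugate_iff.mpr
    ⟨by rw [lt_div_iff₀ hγ0]; linarith,
     by rw [one_div, one_div, inv_inv, inv_inv]; ring⟩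
  have hgγ : Continuous fun x => g x ^ γ := hg.rpow_const fun x => Or.inr hγ0.le
  have mem1 : MemLp (fun x => g x ^ γ) (ENNReal.ofReal (1/γ)) μ :=
    MemLp.of_bound hgγ.aestronglyMeasurable 1 (ae_of_all _ fun x => by
      rw [Real.norm_of_nonneg (Real.rpow_nonneg (h0 x) _)]
      exact Real.rpow_le_one (h0 x) (h1 x) hγ0.le)
  have mem2 : MemLp (fun _ : α => (1:ℝ)) (ENNReal.ofReal (1/(1-γ))) μ := memLp_const 1
  have key := integral_mul_le_Lp_mul_Lq_of_nonneg hpq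
    (ae_of_all _ fun x => Real.rpow_nonneg (h0 x) γ)
    (ae_of_all _ fun _ => zero_le_one) mem1 mem2
  simp only [mul_one, Real.one_rpow, integral_const, measure_univ, ENNReal.toReal_one,
    one_smul, smul_eq_mul] at key
  have hpt : ∀ x, (g x ^ γ) ^ γ⁻¹ = g x := fun x => by
    rw [← Real.rpow_mul (h0 x), mul_inv_cancel₀ hγ0.ne', Real.rpow_one]
  rw [one_div_one_div] at key
  simpa [hpt] using key

private lemma aux_coupling {E : Type*} [NormedAddCommGroup E] [NormedSpace ℝ E]
    [SecondCountableTopology E] [MeasurableSpace E] [BorelSpace E]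
    (ν₁ ν₂ : Measure E) [IsProbabilityMeasure ν₁] [IsProbabilityMeasure ν₂]
    (p γ : ℝ) (hp0 : 0 ≤ p) (hγ0 : 0 < γ) (hγ1 : γ ≤ 1)
    (h₁ : Integrable (fun u => ‖u‖ ^ p) ν₁) (h₂ : Integrable (fun u => ‖u‖ ^ p) ν₂)
    (f : E → ℝ) (hfc : Continuous f) (Ch : ℝ) (hCh : 0 ≤ Ch)
    (hlip : ∀ u₁ u₂ : E, |f u₁ - f u₂| ≤ Ch * dQ p γ u₁ u₂)
    (intf₁ : Integrable f ν₁) (intf₂ : Integrable f ν₂)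
    (π : Measure (E × E)) (hπ : IsCoupling ν₁ ν₂ π) :
    |(∫ u, f u ∂ν₁) - ∫ u, f u ∂ν₂| ≤
      Ch * (1 + (∫ u, ‖u‖ ^ p ∂ν₁) + ∫ u, ‖u‖ ^ p ∂ν₂) ^ ((1:ℝ)/2) *
        (∫ pr : E × E, min 1 (‖pr.1 - pr.2‖ ^ 2) ∂π) ^ (γ/2) := by
  obtain ⟨hπprob, hπ1, hπ2⟩ := hπ
  haveI := hπprob
  have hbase_nonneg : ∀ pr : E × E, (0:ℝ) ≤ 1 + ‖pr.1‖ ^ p + ‖pr.2‖ ^ p := fun pr => by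
    have a1 := Real.rpow_nonneg (norm_nonneg pr.1) p
    have a2 := Real.rpow_nonneg (norm_nonneg pr.2) p
    linarith
  have hbase1 : ∀ pr : E × E, (1:ℝ) ≤ 1 + ‖pr.1‖ ^ p + ‖pr.2‖ ^ p := fun pr => by
    have a1 := Real.rpow_nonneg (norm_nonneg pr.1) p
    have a2 := Real.rpow_nonneg (norm_nonneg pr.2) p
    linarith
  -- abbreviations
  set a : E × E → ℝ := fun pr => min 1 (‖pr.1 - pr.2‖ ^ γ) with ha
  set b : E × E → ℝ := fun pr => (1 + ‖pr.1‖ ^ p + ‖pr.2‖ ^ p) ^ ((1:ℝ)/2) with hb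
  set g : E × E → ℝ := fun pr => min 1 (‖pr.1 - pr.2‖ ^ 2) with hgdef
  have ha_cont : Continuous a := continuous_const.min
    ((continuous_fst.sub continuous_snd).norm.rpow_const fun _ => Or.inr hγ0.le)
  have hb_cont : Continuous b :=
    ((continuous_const.add (continuous_fst.norm.rpow_const fun _ => Or.inr hp0)).add
      (continuous_snd.norm.rpow_const fun _ => Or.inr hp0)).rpow_const fun _ => Or.inr (by norm_num)
  have hg_cont : Continuous g :=
    continuous_const.min ((continuous_fst.sub continuous_snd).norm.pow 2)
  have ha_nonneg : ∀ pr, 0 ≤ a pr := fun pr =>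
    le_min zero_le_one (Real.rpow_nonneg (norm_nonneg _) _)
  have hb_nonneg : ∀ pr, 0 ≤ b pr := fun pr => Real.rpow_nonneg (hbase_nonneg pr) _
  have hg_nonneg : ∀ pr, 0 ≤ g pr := fun pr => le_min zero_le_one (by positivity)
  have hg_le_one : ∀ pr, g pr ≤ 1 := fun pr => min_le_left _ _
  have hnp_cont : Continuous fun u : E => ‖u‖ ^ p :=
    continuous_norm.rpow_const fun _ => Or.inr hp0
  -- integrability of the marginal moment functions w.r.t. π
  have int1 : Integrable (fun pr : E × E => ‖pr.1‖ ^ p) π := by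
    have h := h₁; rw [← hπ1] at h
    exact (integrable_map_measure hnp_cont.aestronglyMeasurable
      measurable_fst.aemeasurable).mp h
  have int2 : Integrable (fun pr : E × E => ‖pr.2‖ ^ p) π := by
    have h := h₂; rw [← hπ2] at h
    exact (integrable_map_measure hnp_cont.aestronglyMeasurable
      measurable_snd.aemeasurable).mp h
  have int12 : Integrable (fun pr : E × E => 1 + ‖pr.1‖ ^ p) π := by
    exact (integrable_const 1).add int1
  have intbase : Integrable (fun pr : E × E => 1 + ‖pr.1‖ ^ p + ‖pr.2‖ ^ p) π := by
    exact int12.add int2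
  have intf1 : Integrable (fun pr : E × E => f pr.1) π := by
    have h := intf₁; rw [← hπ1] at h
    exact (integrable_map_measure hfc.aestronglyMeasurable measurable_fst.aemeasurable).mp h
  have intf2 : Integrable (fun pr : E × E => f pr.2) π := by
    have h := intf₂; rw [← hπ2] at h
    exact (integrable_map_measure hfc.aestronglyMeasurable measurable_snd.aemeasurable).mp h
  -- transport of integrals
  have hEq1 : ∫ u, f u ∂ν₁ = ∫ pr : E × E, f pr.1 ∂π := by
    rw [← hπ1, integral_map measurable_fst.aemeasurable hfc.aestronglyMeasurable]
  have hEq2 : ∫ u, f u ∂ν₂ = ∫ pr : E × E, f pr.2 ∂π := by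
    rw [← hπ2, integral_map measurable_snd.aemeasurable hfc.aestronglyMeasurable]
  have hEqn1 : ∫ u, ‖u‖ ^ p ∂ν₁ = ∫ pr : E × E, ‖pr.1‖ ^ p ∂π := by
    rw [← hπ1, integral_map measurable_fst.aemeasurable hnp_cont.aestronglyMeasurable]
  have hEqn2 : ∫ u, ‖u‖ ^ p ∂ν₂ = ∫ pr : E × E, ‖pr.2‖ ^ p ∂π := by
    rw [← hπ2, integral_map measurable_snd.aemeasurable hnp_cont.aestronglyMeasurable]
  have hb_le : ∀ pr : E × E, b pr ≤ 1 + ‖pr.1‖ ^ p + ‖pr.2‖ ^ p := fun pr => by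
    calc b pr ≤ (1 + ‖pr.1‖ ^ p + ‖pr.2‖ ^ p) ^ (1:ℝ) :=
        Real.rpow_le_rpow_of_exponent_le (hbase1 pr) (by norm_num)
      _ = _ := Real.rpow_one _
  have intdQ : Integrable (fun pr => a pr * b pr) π := by
    refine intbase.mono' (ha_cont.mul hb_cont).aestronglyMeasurable (ae_of_all _ fun pr => ?_)
    rw [Real.norm_of_nonneg (mul_nonneg (ha_nonneg pr) (hb_nonneg pr))]
    calc a pr * b pr ≤ 1 * (1 + ‖pr.1‖ ^ p + ‖pr.2‖ ^ p) :=
        mul_le_mul (min_le_left _ _) (hb_le pr) (hb_nonneg pr) zero_le_one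
      _ = _ := one_mul _
  -- step A
  have habs : |(∫ u, f u ∂ν₁) - ∫ u, f u ∂ν₂| ≤ Ch * ∫ pr, a pr * b pr ∂π := by
    rw [hEq1, hEq2, ← integral_sub intf1 intf2]
    have habs0 : |∫ pr, (f pr.1 - f pr.2) ∂π| ≤ ∫ pr, |f pr.1 - f pr.2| ∂π := by
      simpa [Real.norm_eq_abs] using
        norm_integral_le_integral_norm (μ := π) (fun pr : E × E => f pr.1 - f pr.2)
    calc |∫ pr, (f pr.1 - f pr.2) ∂π| ≤ ∫ pr, |f pr.1 - f pr.2| ∂π := habs0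
      _ ≤ ∫ pr, Ch * (a pr * b pr) ∂π :=
        integral_mono (intf1.sub intf2).abs (intdQ.const_mul Ch)
          (fun pr => hlip pr.1 pr.2)
      _ = Ch * ∫ pr, a pr * b pr ∂π := integral_const_mul Ch _
  -- step B : Cauchy-Schwarz
  have hpq2 : Real.HolderConjugate 2 2 := Real.holderConjugate_iff.mpr ⟨one_lt_two, by norm_num⟩
  have mema : MemLp a (ENNReal.ofReal 2) π :=
    MemLp.of_bound ha_cont.aestronglyMeasurable 1 (ae_of_all _ fun pr => by
      rw [Real.norm_of_nonneg (ha_nonneg pr)]; exact min_le_left _ _)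
  have memb : MemLp b (ENNReal.ofReal 2) π := by
    rw [show (ENNReal.ofReal 2) = 2 by simp [ENNReal.ofReal_ofNat]]
    refine (memLp_two_iff_integrable_sq hb_cont.aestronglyMeasurable).mpr ?_
    have hbs : (fun pr => b pr ^ (2:ℕ)) = fun pr : E × E => 1 + ‖pr.1‖ ^ p + ‖pr.2‖ ^ p :=
      funext fun pr => by
        rw [hb, ← Real.rpow_natCast ((1 + ‖pr.1‖ ^ p + ‖pr.2‖ ^ p) ^ ((1:ℝ)/2)) 2,
          ← Real.rpow_mul (hbase_nonneg pr)]
        norm_num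
    rw [hbs]; exact intbase
  have holder := integral_mul_le_Lp_mul_Lq_of_nonneg hpq2 (ae_of_all _ ha_nonneg)
    (ae_of_all _ hb_nonneg) mema memb
  -- identify the two factors
  have hinta2 : ∫ pr, a pr ^ (2:ℝ) ∂π = ∫ pr, g pr ^ γ ∂π :=
    integral_congr_ae (ae_of_all _ fun pr =>
      aux_min_sq (norm_nonneg (pr.1 - pr.2)) hγ0 hγ1)
  have hintb2 : ∫ pr, b pr ^ (2:ℝ) ∂π
      = 1 + (∫ u, ‖u‖ ^ p ∂ν₁) + ∫ u, ‖u‖ ^ p ∂ν₂ := by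
    have hbs : (fun pr => b pr ^ (2:ℝ)) = fun pr : E × E => 1 + ‖pr.1‖ ^ p + ‖pr.2‖ ^ p :=
      funext fun pr => by
        rw [hb, ← Real.rpow_mul (hbase_nonneg pr)]; norm_num
    rw [hbs, integral_add int12 int2, integral_add (integrable_const 1) int1, integral_const]
    simp [measure_univ, hEqn1, hEqn2]
  -- Jensen
  have hJ : ∫ pr, g pr ^ γ ∂π ≤ (∫ pr, g pr ∂π) ^ γ :=
    aux_jensen π hg_cont hg_nonneg hg_le_one hγ0 hγ1
  have hIπ_nonneg : 0 ≤ ∫ pr, g pr ∂π := integral_nonneg hg_nonneg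
  have hintgγ_nonneg : 0 ≤ ∫ pr, g pr ^ γ ∂π :=
    integral_nonneg fun pr => Real.rpow_nonneg (hg_nonneg pr) γ
  have hS_nonneg : (0:ℝ) ≤ 1 + (∫ u, ‖u‖ ^ p ∂ν₁) + ∫ u, ‖u‖ ^ p ∂ν₂ := by
    have a1 : 0 ≤ ∫ u, ‖u‖ ^ p ∂ν₁ :=
      integral_nonneg fun u => Real.rpow_nonneg (norm_nonneg u) p
    have a2 : 0 ≤ ∫ u, ‖u‖ ^ p ∂ν₂ :=
      integral_nonneg fun u => Real.rpow_nonneg (norm_nonneg u) p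
    linarith
  -- assemble
  have step1 : ∫ pr, a pr * b pr ∂π ≤
      ((∫ pr, g pr ∂π) ^ γ) ^ ((1:ℝ)/2) *
        (1 + (∫ u, ‖u‖ ^ p ∂ν₁) + ∫ u, ‖u‖ ^ p ∂ν₂) ^ ((1:ℝ)/2) := by
    refine holder.trans ?_
    rw [hinta2, hintb2]
    have : (∫ pr, g pr ^ γ ∂π) ^ ((1:ℝ)/2) ≤ ((∫ pr, g pr ∂π) ^ γ) ^ ((1:ℝ)/2) :=
      Real.rpow_le_rpow hintgγ_nonneg hJ (by norm_num)
    exact mul_le_mul_of_nonneg_right this (Real.rpow_nonneg hS_nonneg _)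
  have hpow : ((∫ pr, g pr ∂π) ^ γ) ^ ((1:ℝ)/2) = (∫ pr, g pr ∂π) ^ (γ/2) := by
    rw [← Real.rpow_mul hIπ_nonneg, show γ * (1/2) = γ/2 by ring]
  calc |(∫ u, f u ∂ν₁) - ∫ u, f u ∂ν₂| ≤ Ch * ∫ pr, a pr * b pr ∂π := habs
    _ ≤ Ch * (((∫ pr, g pr ∂π) ^ γ) ^ ((1:ℝ)/2) *
        (1 + (∫ u, ‖u‖ ^ p ∂ν₁) + ∫ u, ‖u‖ ^ p ∂ν₂) ^ ((1:ℝ)/2)) :=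
      mul_le_mul_of_nonneg_left step1 hCh
    _ = Ch * (1 + (∫ u, ‖u‖ ^ p ∂ν₁) + ∫ u, ‖u‖ ^ p ∂ν₂) ^ ((1:ℝ)/2) *
        (∫ pr, g pr ∂π) ^ (γ/2) := by rw [hpow]; ring

/-- weighted-Hölder test functionals are Lipschitz w.r.t. the
bounded Wasserstein distance `W₂`:
`|ν₁(f) − ν₂(f)| ≤ ‖f‖_{p,γ} (1 + ν₁(‖·‖^p) + ν₂(‖·‖^p))^{1/2} (W₂(ν₁,ν₂))^γ`. -/
theorem statement0
    {E : Type*} [NormedAddCommGroup E] [NormedSpace ℝ E] [CompleteSpace E]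
    [SecondCountableTopology E] [MeasurableSpace E] [BorelSpace E]
    (ν₁ ν₂ : Measure E) [IsProbabilityMeasure ν₁] [IsProbabilityMeasure ν₂]
    (p γ : ℝ) (hp : 1 ≤ p) (hγ : γ ∈ Set.Ioc (0 : ℝ) 1)
    (h₁ : Integrable (fun u => ‖u‖ ^ p) ν₁)
    (h₂ : Integrable (fun u => ‖u‖ ^ p) ν₂)
    (f : E → ℝ) (hf : MemC Set.univ p γ f) :
    |(∫ u, f u ∂ν₁) - ∫ u, f u ∂ν₂| ≤
      CNorm Set.univ p γ f *
        (1 + (∫ u, ‖u‖ ^ p ∂ν₁) + ∫ u, ‖u‖ ^ p ∂ν₂) ^ ((1 : ℝ) / 2) *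
        W2 ν₁ ν₂ ^ γ := by
  obtain ⟨hγ0, hγ1⟩ := hγ
  have hp0 : (0:ℝ) ≤ p := le_trans zero_le_one hp
  obtain ⟨hfcOn, hw_bdd, hh_bdd⟩ := hf
  have hfc : Continuous f := continuousOn_univ.mp hfcOn
  set Cw := sSup (wQuot p f '' (Set.univ : Set E)) with hCwdef
  set Ch := sSup (hQuot p γ f '' ((Set.univ : Set E) ×ˢ (Set.univ : Set E))) with hChdef
  have hCw0 : 0 ≤ Cw := by
    have h0 : wQuot p f 0 ≤ Cw := le_csSup hw_bdd ⟨0, Set.mem_univ 0, rfl⟩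
    have h1 : 0 ≤ wQuot p f (0:E) := div_nonneg (abs_nonneg _) (by positivity)
    linarith
  have hCh0 : 0 ≤ Ch := by
    have h0 : hQuot p γ f ((0:E), (0:E)) ≤ Ch := le_csSup hh_bdd ⟨((0:E), (0:E)), by simp, rfl⟩
    have h1 : 0 ≤ hQuot p γ f ((0:E), (0:E)) :=
      div_nonneg (abs_nonneg _)
        (mul_nonneg (le_min zero_le_one (Real.rpow_nonneg (norm_nonneg _) _))
          (Real.rpow_nonneg (by positivity) _))
    linarith
  have hdQ0 : ∀ u₁ u₂ : E, 0 ≤ dQ p γ u₁ u₂ := fun u₁ u₂ =>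
    mul_nonneg (le_min zero_le_one (Real.rpow_nonneg (norm_nonneg _) _))
      (Real.rpow_nonneg (by positivity) _)
  have hlip : ∀ u₁ u₂ : E, |f u₁ - f u₂| ≤ Ch * dQ p γ u₁ u₂ := by
    intro u₁ u₂
    have hq : |f u₁ - f u₂| / dQ p γ u₁ u₂ ≤ Ch :=
      le_csSup hh_bdd ⟨(u₁, u₂), by simp, rfl⟩
    rcases eq_or_lt_of_le (hdQ0 u₁ u₂) with h0 | hpos
    · have hfac : (0:ℝ) < (1 + ‖u₁‖ ^ p + ‖u₂‖ ^ p) ^ ((1:ℝ)/2) := by positivity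
      have hmin : min 1 (‖u₁ - u₂‖ ^ γ) = 0 := by
        rcases mul_eq_zero.mp h0.symm with h | h
        · exact h
        · exact absurd h hfac.ne'
      have hnorm : ‖u₁ - u₂‖ ^ γ = 0 := by
        rcases min_eq_iff.mp hmin with h | h
        · exact absurd h.1 one_ne_zero
        · exact h.1
      have heq : u₁ = u₂ := by
        have h2 := (Real.rpow_eq_zero (norm_nonneg _) hγ0.ne').mp hnorm
        exact sub_eq_zero.mp (norm_eq_zero.mp h2)
      rw [heq, sub_self, abs_zero]
      exact mul_nonneg hCh0 (hdQ0 _ _)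
    · exact (div_le_iff₀ hpos).mp hq
  have hwb : ∀ u, |f u| ≤ Cw * (1 + ‖u‖ ^ (p/2)) := fun u => by
    have hq : |f u| / (1 + ‖u‖ ^ (p/2)) ≤ Cw := le_csSup hw_bdd ⟨u, Set.mem_univ u, rfl⟩
    have hpos : (0:ℝ) < 1 + ‖u‖ ^ (p/2) := by positivity
    exact (div_le_iff₀ hpos).mp hq
  have half_le : ∀ u : E, ‖u‖ ^ (p/2) ≤ 1 + ‖u‖ ^ p := fun u => by
    rcases le_total ‖u‖ 1 with h | h
    · have h1 := Real.rpow_le_one (norm_nonneg u) h (by positivity : (0:ℝ) ≤ p/2)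
      have h2 := Real.rpow_nonneg (norm_nonneg u) p
      linarith
    · have h1 := Real.rpow_le_rpow_of_exponent_le h (by linarith : p/2 ≤ p)
      linarith
  have intf : ∀ ν : Measure E, IsProbabilityMeasure ν →
      Integrable (fun u => ‖u‖ ^ p) ν → Integrable f ν := by
    intro ν hprob hint
    haveI := hprob
    refine Integrable.mono' ((integrable_const (Cw * 2)).add (hint.const_mul Cw))
      hfc.aestronglyMeasurable (ae_of_all _ fun u => ?_)
    show ‖f u‖ ≤ Cw * 2 + Cw * ‖u‖ ^ p
    rw [Real.norm_eq_abs]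
    calc |f u| ≤ Cw * (1 + ‖u‖ ^ (p/2)) := hwb u
      _ ≤ Cw * (2 + ‖u‖ ^ p) := by
        have := half_le u
        exact mul_le_mul_of_nonneg_left (by linarith) hCw0
      _ = Cw * 2 + Cw * ‖u‖ ^ p := by ring
  have intf1 := intf ν₁ inferInstance h₁
  have intf2 := intf ν₂ inferInstance h₂
  set S := 1 + (∫ u, ‖u‖ ^ p ∂ν₁) + ∫ u, ‖u‖ ^ p ∂ν₂ with hSdef
  have hS0 : 0 ≤ S := by
    have a1 : 0 ≤ ∫ u, ‖u‖ ^ p ∂ν₁ :=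
      integral_nonneg fun u => Real.rpow_nonneg (norm_nonneg u) p
    have a2 : 0 ≤ ∫ u, ‖u‖ ^ p ∂ν₂ :=
      integral_nonneg fun u => Real.rpow_nonneg (norm_nonneg u) p
    rw [hSdef]; linarith
  have hS12 : 0 ≤ S ^ ((1:ℝ)/2) := Real.rpow_nonneg hS0 _
  have hprod : IsCoupling ν₁ ν₂ (ν₁.prod ν₂) :=
    ⟨inferInstance, by simp, by simp⟩
  haveI hne : Nonempty {π : Measure (E × E) // IsCoupling ν₁ ν₂ π} := ⟨⟨ν₁.prod ν₂, hprod⟩⟩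
  set B := ⨅ π : {π : Measure (E × E) // IsCoupling ν₁ ν₂ π},
      ∫ pr : E × E, min 1 (‖pr.1 - pr.2‖ ^ 2) ∂π.1 with hBdef
  have hW2 : W2 ν₁ ν₂ = B ^ ((1:ℝ)/2) := rfl
  have hInonneg : ∀ π : {π : Measure (E × E) // IsCoupling ν₁ ν₂ π},
      0 ≤ ∫ pr : E × E, min 1 (‖pr.1 - pr.2‖ ^ 2) ∂π.1 := fun π =>
    integral_nonneg fun pr => le_min zero_le_one (by positivity)
  have hB0 : 0 ≤ B := Real.iInf_nonneg hInonneg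
  have hKey : ∀ ε : ℝ, 0 < ε →
      |(∫ u, f u ∂ν₁) - ∫ u, f u ∂ν₂| ≤ (Ch * S ^ ((1:ℝ)/2)) * (B + ε) ^ (γ/2) := by
    intro ε hε
    obtain ⟨π, hπlt⟩ := exists_lt_of_ciInf_lt (lt_add_of_pos_right B hε)
    have hb := aux_coupling ν₁ ν₂ p γ hp0 hγ0 hγ1 h₁ h₂ f hfc Ch hCh0 hlip intf1 intf2
      π.1 π.2
    refine hb.trans ?_
    rw [← hSdef]
    exact mul_le_mul_of_nonneg_left
      (Real.rpow_le_rpow (hInonneg π) hπlt.le (by positivity))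
      (mul_nonneg hCh0 hS12)
  have hfinal : |(∫ u, f u ∂ν₁) - ∫ u, f u ∂ν₂| ≤ (Ch * S ^ ((1:ℝ)/2)) * B ^ (γ/2) :=
    aux_limit (mul_nonneg hCh0 hS12) hB0 (half_pos hγ0) hKey
  have hW2γ : W2 ν₁ ν₂ ^ γ = B ^ (γ/2) := by
    rw [hW2, ← Real.rpow_mul hB0, show (1:ℝ)/2 * γ = γ/2 by ring]
  rw [hW2γ]
  have hCN : Ch ≤ CNorm Set.univ p γ f := by
    have h : CNorm Set.univ p γ f = Cw + Ch := rfl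
    linarith
  calc |(∫ u, f u ∂ν₁) - ∫ u, f u ∂ν₂| ≤ (Ch * S ^ ((1:ℝ)/2)) * B ^ (γ/2) := hfinal
    _ ≤ CNorm Set.univ p γ f * S ^ ((1:ℝ)/2) * B ^ (γ/2) :=
      mul_le_mul_of_nonneg_right (mul_le_mul_of_nonneg_right hCN hS12)
        (Real.rpow_nonneg hB0 _)
end PaperProb
end
end

section
/- Under Assumption 2, let p ∈ [1,q] and γ ∈ (0,1]. There exists a constant K, independent of the admissible step size Δ, of u₁, u₂, and of k, such that for every f ∈ C_{p,γ}(E^h;ℝ), all u₁, u₂ ∈ E^h and every k ∈ ℕ: |P^Δ_{t_k} f(u₁) − P^Δ_{t_k} f(u₂)| ≤ K·‖f‖_{p,γ}·‖u₁−u₂‖^γ·(1+‖u₁‖^{p·q̃/2+γκ}+‖u₂‖^{p·q̃/2+γκ})·(ρ^Δ(t_k))^γ. -/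
open MeasureTheory Filter Set Topology ENNReal
noncomputable section

namespace PaperProb

variable {E Ω : Type*}

/-! ### auxiliary lemmas for statement 9 -/

private lemma aux_add_rpow_le {x y e : ℝ} (hx : 0 ≤ x) (hy : 0 ≤ y) (he : 0 ≤ e) (he1 : e ≤ 1) :
    (x + y) ^ e ≤ x ^ e + y ^ e := by
  have h := NNReal.rpow_add_le_add_rpow x.toNNReal y.toNNReal he he1
  have h' := NNReal.coe_le_coe.2 h
  push_cast at h'
  rwa [Real.coe_toNNReal x hx, Real.coe_toNNReal y hy] at h'

private lemma aux_add3_rpow_le {x y e : ℝ} (hx : 0 ≤ x) (hy : 0 ≤ y) (he : 0 ≤ e) (he1 : e ≤ 1) :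
    (1 + x + y) ^ e ≤ 1 + x ^ e + y ^ e := by
  calc (1 + x + y) ^ e ≤ (1 + x) ^ e + y ^ e :=
        aux_add_rpow_le (by positivity) hy he he1
    _ ≤ 1 ^ e + x ^ e + y ^ e := by
        have := aux_add_rpow_le zero_le_one hx he he1
        linarith
    _ = 1 + x ^ e + y ^ e := by rw [Real.one_rpow]

private lemma aux_mixed {a b x y T : ℝ} (ha : 0 ≤ a) (hb : 0 ≤ b) (hx : 0 ≤ x) (hy : 0 ≤ y)
    (hT : x + y ≤ T) : a ^ x * b ^ y ≤ 1 + a ^ T + b ^ T := by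
  set m := max 1 (max a b) with hm
  have hm1 : (1:ℝ) ≤ m := le_max_left _ _
  have hm0 : (0:ℝ) < m := lt_of_lt_of_le one_pos hm1
  have h1 : a ^ x * b ^ y ≤ m ^ x * m ^ y := by
    apply mul_le_mul
    · exact Real.rpow_le_rpow ha (le_trans (le_max_left a b) (le_max_right _ _)) hx
    · exact Real.rpow_le_rpow hb (le_trans (le_max_right a b) (le_max_right _ _)) hy
    · positivity
    · positivity
  have h2 : m ^ x * m ^ y = m ^ (x + y) := (Real.rpow_add hm0 x y).symm
  have h3 : m ^ (x + y) ≤ m ^ T := Real.rpow_le_rpow_of_exponent_le hm1 hT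
  have h4 : m ^ T ≤ 1 + a ^ T + b ^ T := by
    rcases max_cases 1 (max a b) with ⟨h, _⟩ | ⟨h, _⟩
    · rw [hm, h, Real.one_rpow]
      have h5 : 0 ≤ a ^ T := Real.rpow_nonneg ha T
      have h6 : 0 ≤ b ^ T := Real.rpow_nonneg hb T
      linarith
    · rcases max_cases a b with ⟨h', _⟩ | ⟨h', _⟩
      · rw [hm, h, h']
        have h6 : 0 ≤ b ^ T := Real.rpow_nonneg hb T
        linarith
      · rw [hm, h, h']
        have h5 : 0 ≤ a ^ T := Real.rpow_nonneg ha T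
        linarith
  calc a ^ x * b ^ y ≤ m ^ x * m ^ y := h1
    _ = m ^ (x+y) := h2
    _ ≤ m ^ T := h3
    _ ≤ _ := h4

private lemma aux_one_var {a b x T : ℝ} (ha : 0 ≤ a) (hb : 0 ≤ b) (hx : 0 ≤ x)
    (hT : x ≤ T) : a ^ x ≤ 1 + a ^ T + b ^ T := by
  have := aux_mixed ha hb hx le_rfl (by linarith : x + 0 ≤ T)
  simpa [Real.rpow_zero] using this

private lemma aux_moment {Ω E : Type*} [MeasurableSpace Ω] [NormedAddCommGroup E]
    {ℙ : Measure Ω} [IsProbabilityMeasure ℙ] {F : Ω → E}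
    (hF : AEStronglyMeasurable F ℙ) {s r : ℝ} (hs : 0 < s) (hsr : s ≤ r) :
    ∫⁻ ω, (‖F ω‖₊ : ℝ≥0∞) ^ s ∂ℙ ≤ (∫⁻ ω, (‖F ω‖₊ : ℝ≥0∞) ^ r ∂ℙ) ^ (s / r) := by
  have hr : 0 < r := hs.trans_le hsr
  have h := eLpNorm_le_eLpNorm_of_exponent_le (μ := ℙ)
    (p := ENNReal.ofReal s) (q := ENNReal.ofReal r) (ENNReal.ofReal_le_ofReal hsr) hF
  rw [eLpNorm_eq_lintegral_rpow_enorm_toReal (by simp [hs]) (by simp),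
      eLpNorm_eq_lintegral_rpow_enorm_toReal (by simp [hr]) (by simp),
      ENNReal.toReal_ofReal hs.le, ENNReal.toReal_ofReal hr.le] at h
  simp only [enorm_eq_nnnorm] at h
  have h2 := ENNReal.rpow_le_rpow h hs.le
  rwa [← ENNReal.rpow_mul, ← ENNReal.rpow_mul, one_div, one_div,
    inv_mul_cancel₀ hs.ne', ENNReal.rpow_one, inv_mul_eq_div] at h2

private lemma aux_meas_comp {Ω E : Type*} [MeasurableSpace Ω] [TopologicalSpace E]
    [MeasurableSpace E] [OpensMeasurableSpace E] {S : Set E} {f : E → ℝ}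
    (hf : ContinuousOn f S) {g : Ω → E} (hg : Measurable g) (hmem : ∀ ω, g ω ∈ S) :
    Measurable fun ω => f (g ω) := by
  have hg' : Measurable fun ω => (⟨g ω, hmem ω⟩ : S) := hg.subtype_mk
  have hf' : Continuous (S.restrict f) := continuousOn_iff_continuous_restrict.mp hf
  exact hf'.measurable.comp hg'

set_option maxHeartbeats 1000000

/-- Hölder-type dependence of the numerical semigroup on the initial
datum: `|P^Δ_{t_k} f(u₁) − P^Δ_{t_k} f(u₂)| ≤
K‖f‖_{p,γ}‖u₁−u₂‖^γ(1+‖u₁‖^{pq̃/2+γκ}+‖u₂‖^{pq̃/2+γκ})(ρ^Δ(t_k))^γ`. -/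
theorem statement9
    {E Ω : Type*} [NormedAddCommGroup E] [NormedSpace ℝ E] [CompleteSpace E]
    [SecondCountableTopology E] [MeasurableSpace E] [BorelSpace E]
    {mΩ : MeasurableSpace Ω} (ℙ : Measure Ω) (ℱ : Filtration ℝ mΩ)
    (Eh : ℝ → Set E) (Y : ℝ × ℝ → E → ℕ → Ω → E)
    (ht τt q qt γ₂ κ L₃ L₄ : ℝ) (ρD : ℝ × ℝ → ℝ → ℝ)
    (hA2 : Assumption2 ℙ ℱ Eh Y ht τt q qt γ₂ κ L₃ L₄ ρD)
    (μD : ℝ × ℝ → Measure E)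
    (hμD : ∀ Δ, Adm ht τt Δ → IsInvMeasureD ℙ Y (Eh Δ.1) Δ (μD Δ))
    (p γ : ℝ) (hp : p ∈ Set.Icc (1 : ℝ) q) (hγ : γ ∈ Set.Ioc (0 : ℝ) 1) :
    ∃ K > (0 : ℝ), ∀ Δ, Adm ht τt Δ → ∀ f : E → ℝ, MemC (Eh Δ.1) p γ f →
      ∀ u₁ ∈ Eh Δ.1, ∀ u₂ ∈ Eh Δ.1, ∀ k : ℕ,
        |PD ℙ Y Δ k f u₁ - PD ℙ Y Δ k f u₂| ≤
          K * CNorm (Eh Δ.1) p γ f * ‖u₁ - u₂‖ ^ γ *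
            (1 + ‖u₁‖ ^ (p * qt / 2 + γ * κ) + ‖u₂‖ ^ (p * qt / 2 + γ * κ)) *
            ρD Δ ((k : ℝ) * Δ.2) ^ γ := by
  obtain ⟨p1, pq⟩ := hp
  obtain ⟨γ0, γ1⟩ := hγ
  have hq0 : (0:ℝ) < q := lt_of_lt_of_le two_pos hA2.hq
  have hqt1 : (1:ℝ) ≤ qt := hA2.hqt
  have hκ0 : (0:ℝ) ≤ κ := hA2.hκ.1
  have hL₃ := hA2.hL₃
  have hL₄ := hA2.hL₄
  haveI : IsProbabilityMeasure ℙ := hA2.prob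
  have hp0 : (0:ℝ) < p := lt_of_lt_of_le one_pos p1
  set E₀ : ℝ := L₃ ^ (p / q) with hE₀def
  have hE₀0 : 0 ≤ E₀ := Real.rpow_nonneg hL₃.le _
  have hKpos : (0:ℝ) < 9 * max 1 L₄ * (1 + 2 * E₀) ^ ((1:ℝ)/2) :=
    mul_pos (mul_pos (by norm_num) (lt_of_lt_of_le one_pos (le_max_left _ _)))
      (Real.rpow_pos_of_pos (by linarith) _)
  refine ⟨9 * max 1 L₄ * (1 + 2 * E₀) ^ ((1:ℝ)/2), hKpos, ?_⟩
  intro Δ hΔ f hf u₁ hu₁ u₂ hu₂ k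
  set S := Eh Δ.1 with hSdef
  set c := ‖u₁ - u₂‖ with hcdef
  set r := ρD Δ ((k:ℝ) * Δ.2) with hrdef
  have hr0 : 0 ≤ r := hA2.ρD_nonneg _ _
  set a := ‖u₁‖ with hadef
  set b := ‖u₂‖ with hbdef
  have ha0 : 0 ≤ a := norm_nonneg _
  have hb0 : 0 ≤ b := norm_nonneg _
  have hc0 : 0 ≤ c := norm_nonneg _
  set T := p * qt / 2 + γ * κ with hTdef
  have hT0 : 0 ≤ T := by positivity
  -- sup constants
  set W := sSup (wQuot (E := E) p f '' S) with hWdef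
  set H := sSup (hQuot (E := E) p γ f '' (S ×ˢ S)) with hHdef
  have hCN : CNorm S p γ f = W + H := rfl
  have hdQ0 : ∀ x y : E, 0 ≤ dQ p γ x y := fun x y =>
    mul_nonneg (le_min zero_le_one (Real.rpow_nonneg (norm_nonneg _) _))
      (Real.rpow_nonneg (by positivity) _)
  have hH0 : 0 ≤ H := by
    refine le_trans ?_ (le_csSup hf.2.2 ⟨(u₁, u₁), ⟨hu₁, hu₁⟩, rfl⟩)
    exact div_nonneg (abs_nonneg _) (hdQ0 _ _)
  have hW0 : 0 ≤ W := by
    refine le_trans ?_ (le_csSup hf.2.1 ⟨u₁, hu₁, rfl⟩)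
    exact div_nonneg (abs_nonneg _) (by positivity)
  have hWb : ∀ u ∈ S, |f u| ≤ W * (1 + ‖u‖ ^ (p/2)) := by
    intro u hu
    have h := le_csSup hf.2.1 ⟨u, hu, rfl⟩
    rw [wQuot, div_le_iff₀ (by positivity)] at h
    linarith [h]
  have hHb : ∀ x ∈ S, ∀ y ∈ S,
      |f x - f y| ≤ H * (‖x - y‖ ^ γ * (1 + ‖x‖ ^ p + ‖y‖ ^ p) ^ ((1:ℝ)/2)) := by
    intro x hx y hy
    have hbpos : (0:ℝ) < (1 + ‖x‖ ^ p + ‖y‖ ^ p) ^ ((1:ℝ)/2) :=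
      Real.rpow_pos_of_pos (by positivity) _
    by_cases hxy : x = y
    · subst hxy
      simp only [sub_self, abs_zero, norm_zero]
      rw [Real.zero_rpow γ0.ne']
      simp only [zero_mul, mul_zero, le_refl]
    · have hcpos : (0:ℝ) < ‖x - y‖ := by
        rw [norm_pos_iff]; exact sub_ne_zero.mpr hxy
      have hd : 0 < dQ p γ x y :=
        mul_pos (lt_min one_pos (Real.rpow_pos_of_pos hcpos γ)) hbpos
      have hle := le_csSup hf.2.2 ⟨(x, y), ⟨hx, hy⟩, rfl⟩
      rw [hQuot, div_le_iff₀ hd] at hle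
      refine hle.trans ?_
      rw [dQ]
      exact mul_le_mul_of_nonneg_left
        (mul_le_mul_of_nonneg_right (min_le_right 1 (‖x - y‖ ^ γ)) hbpos.le) hH0
  -- measurability
  have hYm : ∀ u : E, ∀ j : ℕ, Measurable fun ω => Y Δ u j ω := fun u j =>
    (hA2.jmeas Δ j).comp measurable_prodMk_left
  have hfYm : ∀ u ∈ S, Measurable fun ω => f (Y Δ u k ω) := fun u hu =>
    aux_meas_comp hf.1 (hYm u k) (fun ω => hA2.stateMem Δ hΔ u hu k ω)
  -- moments
  have hmom : ∀ u ∈ S, ∀ e : ℝ, 0 < e → e ≤ q →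
      ∫⁻ ω, (‖Y Δ u k ω‖₊ : ℝ≥0∞) ^ e ∂ℙ ≤
        (ENNReal.ofReal (L₃ * (1 + ‖u‖ ^ (qt * q)))) ^ (e / q) := by
    intro u hu e he heq
    refine (aux_moment ((hYm u k).aestronglyMeasurable) he heq).trans ?_
    exact ENNReal.rpow_le_rpow (hA2.moment Δ hΔ u hu k) (by positivity)
  -- integrability
  have hint : ∀ u ∈ S, Integrable (fun ω => f (Y Δ u k ω)) ℙ := by
    intro u hu
    refine ⟨(hfYm u hu).aestronglyMeasurable, ?_⟩
    show ∫⁻ ω, (‖f (Y Δ u k ω)‖₊ : ℝ≥0∞) ∂ℙ < ⊤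
    have hb : ∀ ω, (‖f (Y Δ u k ω)‖₊ : ℝ≥0∞) ≤
        ENNReal.ofReal W * (1 + (‖Y Δ u k ω‖₊ : ℝ≥0∞) ^ (p/2)) := by
      intro ω
      rw [← enorm_eq_nnnorm (f (Y Δ u k ω)), ← ofReal_norm, Real.norm_eq_abs]
      calc ENNReal.ofReal |f (Y Δ u k ω)|
          ≤ ENNReal.ofReal (W * (1 + ‖Y Δ u k ω‖ ^ (p/2))) :=
            ENNReal.ofReal_le_ofReal (hWb _ (hA2.stateMem Δ hΔ u hu k ω))
        _ = ENNReal.ofReal W * (1 + (‖Y Δ u k ω‖₊ : ℝ≥0∞) ^ (p/2)) := by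
            rw [ENNReal.ofReal_mul hW0,
              ENNReal.ofReal_add zero_le_one (Real.rpow_nonneg (norm_nonneg _) _),
              ENNReal.ofReal_one,
              ← ENNReal.ofReal_rpow_of_nonneg (norm_nonneg _) (by positivity),
              ofReal_norm, enorm_eq_nnnorm]
    calc ∫⁻ ω, (‖f (Y Δ u k ω)‖₊ : ℝ≥0∞) ∂ℙ
        ≤ ∫⁻ ω, ENNReal.ofReal W * (1 + (‖Y Δ u k ω‖₊ : ℝ≥0∞) ^ (p/2)) ∂ℙ :=
          lintegral_mono hb
      _ = ENNReal.ofReal W * ∫⁻ ω, (1 + (‖Y Δ u k ω‖₊ : ℝ≥0∞) ^ (p/2)) ∂ℙ :=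
          lintegral_const_mul' _ _ ENNReal.ofReal_ne_top
      _ < ⊤ := by
          refine ENNReal.mul_lt_top ENNReal.ofReal_lt_top ?_
          rw [lintegral_add_left measurable_const]
          refine ENNReal.add_lt_top.mpr ⟨?_, ?_⟩
          · simp [lintegral_one]
          · refine lt_of_le_of_lt (hmom u hu (p/2) (by positivity) (by linarith)) ?_
            exact ENNReal.rpow_lt_top_of_nonneg (by positivity) ENNReal.ofReal_ne_top
  -- first reduction
  have key : |PD ℙ Y Δ k f u₁ - PD ℙ Y Δ k f u₂| ≤
      (∫⁻ ω, (‖f (Y Δ u₁ k ω) - f (Y Δ u₂ k ω)‖₊ : ℝ≥0∞) ∂ℙ).toReal := by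
    show |(∫ ω, f (Y Δ u₁ k ω) ∂ℙ) - ∫ ω, f (Y Δ u₂ k ω) ∂ℙ| ≤ _
    rw [← integral_sub (hint u₁ hu₁) (hint u₂ hu₂)]
    calc |∫ ω, (f (Y Δ u₁ k ω) - f (Y Δ u₂ k ω)) ∂ℙ|
        = ‖∫ ω, (f (Y Δ u₁ k ω) - f (Y Δ u₂ k ω)) ∂ℙ‖ := (Real.norm_eq_abs _).symm
      _ ≤ (∫⁻ ω, ENNReal.ofReal ‖f (Y Δ u₁ k ω) - f (Y Δ u₂ k ω)‖ ∂ℙ).toReal :=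
          norm_integral_le_lintegral_norm _
      _ = (∫⁻ ω, (‖f (Y Δ u₁ k ω) - f (Y Δ u₂ k ω)‖₊ : ℝ≥0∞) ∂ℙ).toReal := by
          simp_rw [ofReal_norm, enorm_eq_nnnorm]
  -- ENNReal chain
  set D := L₄ * c * (1 + a ^ κ + b ^ κ) * r with hDdef
  have hD0 : 0 ≤ D := by positivity
  set A : Ω → ℝ≥0∞ := fun ω => (‖Y Δ u₁ k ω - Y Δ u₂ k ω‖₊ : ℝ≥0∞) with hAdef
  set B : Ω → ℝ≥0∞ := fun ω =>
    (ENNReal.ofReal (1 + ‖Y Δ u₁ k ω‖ ^ p + ‖Y Δ u₂ k ω‖ ^ p)) ^ ((1:ℝ)/2) with hBdef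
  have hAm : Measurable A := ((hYm u₁ k).sub (hYm u₂ k)).enorm
  have hXm : ∀ u : E, Measurable fun ω => (‖Y Δ u k ω‖₊ : ℝ≥0∞) ^ p := fun u =>
    ((hYm u k).enorm).pow_const p
  have hBm : Measurable B := by
    apply Measurable.pow_const
    apply ENNReal.measurable_ofReal.comp
    exact (measurable_const.add
        ((Real.continuous_rpow_const hp0.le).measurable.comp ((hYm u₁ k).norm))).add
      ((Real.continuous_rpow_const hp0.le).measurable.comp ((hYm u₂ k).norm))
  have hpt : ∀ ω, (‖f (Y Δ u₁ k ω) - f (Y Δ u₂ k ω)‖₊ : ℝ≥0∞) ≤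
      ENNReal.ofReal H * (A ω ^ γ * B ω) := by
    intro ω
    rw [← enorm_eq_nnnorm (f (Y Δ u₁ k ω) - f (Y Δ u₂ k ω)), ← ofReal_norm, Real.norm_eq_abs]
    calc ENNReal.ofReal |f (Y Δ u₁ k ω) - f (Y Δ u₂ k ω)|
        ≤ ENNReal.ofReal (H * (‖Y Δ u₁ k ω - Y Δ u₂ k ω‖ ^ γ *
            (1 + ‖Y Δ u₁ k ω‖ ^ p + ‖Y Δ u₂ k ω‖ ^ p) ^ ((1:ℝ)/2))) :=
          ENNReal.ofReal_le_ofReal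
            (hHb _ (hA2.stateMem Δ hΔ u₁ hu₁ k ω) _ (hA2.stateMem Δ hΔ u₂ hu₂ k ω))
      _ = ENNReal.ofReal H * (A ω ^ γ * B ω) := by
          rw [ENNReal.ofReal_mul hH0,
            ENNReal.ofReal_mul (Real.rpow_nonneg (norm_nonneg _) _),
            ← ENNReal.ofReal_rpow_of_nonneg (norm_nonneg _) γ0.le,
            ← ENNReal.ofReal_rpow_of_nonneg (by positivity) (by norm_num : (0:ℝ) ≤ 1/2),
            ofReal_norm, enorm_eq_nnnorm]
  have hconj : Real.HolderConjugate 2 2 := Real.HolderConjugate.two_two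
  have hCS : ∫⁻ ω, A ω ^ γ * B ω ∂ℙ ≤
      (∫⁻ ω, (A ω ^ γ) ^ (2:ℝ) ∂ℙ) ^ ((1:ℝ)/2) * (∫⁻ ω, B ω ^ (2:ℝ) ∂ℙ) ^ ((1:ℝ)/2) := by
    have h := ENNReal.lintegral_mul_le_Lp_mul_Lq ℙ hconj
      ((hAm.pow_const γ).aemeasurable) (hBm.aemeasurable)
    simpa using h
  have hcon := hA2.contract Δ hΔ u₁ hu₁ u₂ hu₂ k
  have hI2 : ∫⁻ ω, A ω ^ (2:ℝ) ∂ℙ ≤ (ENNReal.ofReal D) ^ (2:ℝ) := by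
    have h2 := ENNReal.rpow_le_rpow hcon (by norm_num : (0:ℝ) ≤ 2)
    rwa [← ENNReal.rpow_mul, show (1:ℝ)/2*2 = 1 by norm_num, ENNReal.rpow_one] at h2
  have hIγ2 : ∫⁻ ω, A ω ^ (γ * 2) ∂ℙ ≤ (ENNReal.ofReal D) ^ (γ * 2) := by
    have hmono := aux_moment (ℙ := ℙ) (F := fun ω => Y Δ u₁ k ω - Y Δ u₂ k ω)
      (((hYm u₁ k).sub (hYm u₂ k)).aestronglyMeasurable)
      (s := γ * 2) (r := 2) (by positivity) (by linarith)
    refine hmono.trans ?_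
    calc (∫⁻ ω, A ω ^ (2:ℝ) ∂ℙ) ^ (γ * 2 / 2)
        ≤ ((ENNReal.ofReal D) ^ (2:ℝ)) ^ (γ * 2 / 2) :=
          ENNReal.rpow_le_rpow hI2 (by positivity)
      _ = (ENNReal.ofReal D) ^ (γ * 2) := by
          rw [← ENNReal.rpow_mul]; congr 1; ring
  have hf1 : (∫⁻ ω, (A ω ^ γ) ^ (2:ℝ) ∂ℙ) ^ ((1:ℝ)/2) ≤ (ENNReal.ofReal D) ^ γ := by
    simp_rw [← ENNReal.rpow_mul]
    calc (∫⁻ ω, A ω ^ (γ*2) ∂ℙ) ^ ((1:ℝ)/2)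
        ≤ ((ENNReal.ofReal D) ^ (γ*2)) ^ ((1:ℝ)/2) :=
          ENNReal.rpow_le_rpow hIγ2 (by norm_num)
      _ = (ENNReal.ofReal D) ^ γ := by
          rw [← ENNReal.rpow_mul]; congr 1; ring
  set N₁ := (ENNReal.ofReal (L₃ * (1 + a ^ (qt*q)))) ^ (p/q) with hN₁
  set N₂ := (ENNReal.ofReal (L₃ * (1 + b ^ (qt*q)))) ^ (p/q) with hN₂
  have hf2 : (∫⁻ ω, B ω ^ (2:ℝ) ∂ℙ) ^ ((1:ℝ)/2) ≤ (1 + N₁ + N₂) ^ ((1:ℝ)/2) := by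
    refine ENNReal.rpow_le_rpow ?_ (by norm_num)
    have hB2 : ∀ ω, B ω ^ (2:ℝ) =
        1 + (‖Y Δ u₁ k ω‖₊ : ℝ≥0∞) ^ p + (‖Y Δ u₂ k ω‖₊ : ℝ≥0∞) ^ p := by
      intro ω
      show ((ENNReal.ofReal _) ^ ((1:ℝ)/2)) ^ (2:ℝ) = _
      rw [← ENNReal.rpow_mul, show (1:ℝ)/2*2 = 1 by norm_num, ENNReal.rpow_one,
        ENNReal.ofReal_add (by positivity) (Real.rpow_nonneg (norm_nonneg _) _),
        ENNReal.ofReal_add zero_le_one (Real.rpow_nonneg (norm_nonneg _) _),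
        ENNReal.ofReal_one,
        ← ENNReal.ofReal_rpow_of_nonneg (norm_nonneg _) hp0.le,
        ← ENNReal.ofReal_rpow_of_nonneg (norm_nonneg _) hp0.le,
        ofReal_norm, ofReal_norm, enorm_eq_nnnorm, enorm_eq_nnnorm]
    calc ∫⁻ ω, B ω ^ (2:ℝ) ∂ℙ
        = ∫⁻ ω, (1 + (‖Y Δ u₁ k ω‖₊ : ℝ≥0∞) ^ p + (‖Y Δ u₂ k ω‖₊ : ℝ≥0∞) ^ p) ∂ℙ :=
          lintegral_congr hB2
      _ = 1 + (∫⁻ ω, (‖Y Δ u₁ k ω‖₊ : ℝ≥0∞) ^ p ∂ℙ) + ∫⁻ ω, (‖Y Δ u₂ k ω‖₊ : ℝ≥0∞) ^ p ∂ℙ := by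
          rw [lintegral_add_left (show Measurable fun ω => (1:ℝ≥0∞) + (‖Y Δ u₁ k ω‖₊ : ℝ≥0∞) ^ p from
              measurable_const.add (hXm u₁)),
            lintegral_add_left measurable_const, lintegral_one, measure_univ]
      _ ≤ 1 + N₁ + N₂ := by
          gcongr
          · exact hmom u₁ hu₁ p hp0 pq
          · exact hmom u₂ hu₂ p hp0 pq
  set m₁ := (L₃ * (1 + a ^ (qt*q))) ^ (p/q) with hm₁
  set m₂ := (L₃ * (1 + b ^ (qt*q))) ^ (p/q) with hm₂
  have hm₁0 : 0 ≤ m₁ := Real.rpow_nonneg (by positivity) _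
  have hm₂0 : 0 ≤ m₂ := Real.rpow_nonneg (by positivity) _
  set R := H * (D ^ γ * (1 + m₁ + m₂) ^ ((1:ℝ)/2)) with hRdef
  have hR0 : 0 ≤ R := mul_nonneg hH0 (by positivity)
  have hN₁' : N₁ = ENNReal.ofReal m₁ :=
    ENNReal.ofReal_rpow_of_nonneg (by positivity) (by positivity)
  have hN₂' : N₂ = ENNReal.ofReal m₂ :=
    ENNReal.ofReal_rpow_of_nonneg (by positivity) (by positivity)
  have hofReal : (1:ℝ≥0∞) + N₁ + N₂ = ENNReal.ofReal (1 + m₁ + m₂) := by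
    rw [hN₁', hN₂', ENNReal.ofReal_add (by positivity) hm₂0,
      ENNReal.ofReal_add zero_le_one hm₁0, ENNReal.ofReal_one]
  have hchain : ∫⁻ ω, (‖f (Y Δ u₁ k ω) - f (Y Δ u₂ k ω)‖₊ : ℝ≥0∞) ∂ℙ ≤
      ENNReal.ofReal R := by
    calc ∫⁻ ω, (‖f (Y Δ u₁ k ω) - f (Y Δ u₂ k ω)‖₊ : ℝ≥0∞) ∂ℙ
        ≤ ∫⁻ ω, ENNReal.ofReal H * (A ω ^ γ * B ω) ∂ℙ := lintegral_mono hpt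
      _ = ENNReal.ofReal H * ∫⁻ ω, A ω ^ γ * B ω ∂ℙ :=
          lintegral_const_mul' _ _ ENNReal.ofReal_ne_top
      _ ≤ ENNReal.ofReal H * ((ENNReal.ofReal D) ^ γ * (1 + N₁ + N₂) ^ ((1:ℝ)/2)) :=
          mul_le_mul_right (hCS.trans (mul_le_mul' hf1 hf2)) _
      _ = ENNReal.ofReal R := by
          rw [hofReal, ENNReal.ofReal_rpow_of_nonneg hD0 γ0.le,
            ENNReal.ofReal_rpow_of_nonneg (by positivity) (by norm_num : (0:ℝ) ≤ 1/2),
            ← ENNReal.ofReal_mul (Real.rpow_nonneg hD0 _), ← ENNReal.ofReal_mul hH0]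
  have hfinal1 : |PD ℙ Y Δ k f u₁ - PD ℙ Y Δ k f u₂| ≤ R :=
    key.trans (ENNReal.toReal_le_of_le_ofReal hR0 hchain)
  -- real algebra
  have hqt0 : (0:ℝ) < qt := lt_of_lt_of_le one_pos hqt1
  have hDγ : D ^ γ ≤ max 1 L₄ * (c ^ γ * ((1 + a ^ (κ*γ) + b ^ (κ*γ)) * r ^ γ)) := by
    have hd0 : (0:ℝ) ≤ 1 + a ^ κ + b ^ κ := by positivity
    rw [hDdef, Real.mul_rpow (by positivity) hr0, Real.mul_rpow (by positivity) hd0,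
      Real.mul_rpow hL₄.le hc0]
    have h1 : L₄ ^ γ ≤ max 1 L₄ := by
      rcases le_total L₄ 1 with h | h
      · exact (Real.rpow_le_one hL₄.le h γ0.le).trans (le_max_left _ _)
      · calc L₄ ^ γ ≤ L₄ ^ (1:ℝ) := Real.rpow_le_rpow_of_exponent_le h γ1
          _ = L₄ := Real.rpow_one _
          _ ≤ _ := le_max_right _ _
    have h2 : (1 + a ^ κ + b ^ κ) ^ γ ≤ 1 + a ^ (κ*γ) + b ^ (κ*γ) := by
      refine le_trans (aux_add3_rpow_le (Real.rpow_nonneg ha0 _)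
        (Real.rpow_nonneg hb0 _) γ0.le γ1) ?_
      rw [← Real.rpow_mul ha0, ← Real.rpow_mul hb0]
    calc L₄ ^ γ * c ^ γ * (1 + a ^ κ + b ^ κ) ^ γ * r ^ γ
        ≤ max 1 L₄ * c ^ γ * (1 + a ^ (κ*γ) + b ^ (κ*γ)) * r ^ γ := by
          gcongr
      _ = max 1 L₄ * (c ^ γ * ((1 + a ^ (κ*γ) + b ^ (κ*γ)) * r ^ γ)) := by ring
  have hV : (1 + m₁ + m₂) ^ ((1:ℝ)/2) ≤
      (1 + 2 * E₀) ^ ((1:ℝ)/2) * (1 + a ^ (p*qt/2) + b ^ (p*qt/2)) := by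
    have hmle : ∀ u : E, (L₃ * (1 + ‖u‖ ^ (qt*q))) ^ (p/q) ≤ E₀ * (1 + ‖u‖ ^ (p*qt)) := by
      intro u
      rw [Real.mul_rpow hL₃.le (by positivity), ← hE₀def]
      have hpq1 : p / q ≤ 1 := (div_le_one hq0).mpr pq
      have hpq0 : 0 ≤ p / q := by positivity
      have hsub := aux_add_rpow_le (y := ‖u‖ ^ (qt*q)) zero_le_one
        (Real.rpow_nonneg (norm_nonneg u) _) hpq0 hpq1
      rw [Real.one_rpow] at hsub
      have hexp : (‖u‖ ^ (qt*q)) ^ (p/q) = ‖u‖ ^ (p*qt) := by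
        rw [← Real.rpow_mul (norm_nonneg u)]
        congr 1
        field_simp
      calc E₀ * (1 + ‖u‖ ^ (qt*q)) ^ (p/q)
          ≤ E₀ * (1 + (‖u‖ ^ (qt*q)) ^ (p/q)) := mul_le_mul_of_nonneg_left hsub hE₀0
        _ = E₀ * (1 + ‖u‖ ^ (p*qt)) := by rw [hexp]
    have h₁ := hmle u₁
    have h₂ := hmle u₂
    rw [← hm₁] at h₁
    rw [← hm₂] at h₂
    have hstep : 1 + m₁ + m₂ ≤ (1 + 2*E₀) * (1 + a ^ (p*qt) + b ^ (p*qt)) := by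
      have hA := Real.rpow_nonneg ha0 (p*qt)
      have hB := Real.rpow_nonneg hb0 (p*qt)
      have hEA := mul_nonneg hE₀0 hA
      have hEB := mul_nonneg hE₀0 hB
      have hexp : (1 + 2*E₀) * (1 + a ^ (p*qt) + b ^ (p*qt)) =
          1 + a ^ (p*qt) + b ^ (p*qt) + 2*E₀ + 2*(E₀ * a ^ (p*qt)) + 2*(E₀ * b ^ (p*qt)) := by
        ring
      rw [hexp]
      linarith [h₁, h₂]
    calc (1 + m₁ + m₂) ^ ((1:ℝ)/2)
        ≤ ((1 + 2*E₀) * (1 + a ^ (p*qt) + b ^ (p*qt))) ^ ((1:ℝ)/2) :=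
          Real.rpow_le_rpow (by positivity) hstep (by norm_num)
      _ = (1+2*E₀) ^ ((1:ℝ)/2) * (1 + a ^ (p*qt) + b ^ (p*qt)) ^ ((1:ℝ)/2) :=
          Real.mul_rpow (by positivity) (by positivity)
      _ ≤ (1+2*E₀) ^ ((1:ℝ)/2) * (1 + a ^ (p*qt/2) + b ^ (p*qt/2)) := by
          refine mul_le_mul_of_nonneg_left ?_ (Real.rpow_nonneg (by positivity) _)
          refine le_trans (aux_add3_rpow_le (Real.rpow_nonneg ha0 _)
            (Real.rpow_nonneg hb0 _) (by norm_num) (by norm_num)) ?_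
          rw [← Real.rpow_mul ha0, ← Real.rpow_mul hb0,
            show p*qt*((1:ℝ)/2) = p*qt/2 by ring]
  have hprod : (1 + a ^ (κ*γ) + b ^ (κ*γ)) * (1 + a ^ (p*qt/2) + b ^ (p*qt/2)) ≤
      9 * (1 + a ^ T + b ^ T) := by
    have hκγ0 : 0 ≤ κ*γ := by positivity
    have hs20 : (0:ℝ) < p*qt/2 := by positivity
    have e1 : κ*γ + p*qt/2 ≤ T := le_of_eq (by rw [hTdef]; ring)
    have eκ : κ*γ ≤ T := le_trans (le_add_of_nonneg_right hs20.le) e1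
    have hγκ0 : 0 ≤ γ*κ := by positivity
    have es : p*qt/2 ≤ T := by rw [hTdef]; linarith
    have hsum : (0:ℝ) < κ*γ + p*qt/2 := by linarith
    have t1 : a ^ (κ*γ) * b ^ (p*qt/2) ≤ 1 + a ^ T + b ^ T :=
      aux_mixed ha0 hb0 hκγ0 hs20.le e1
    have t2 : b ^ (κ*γ) * a ^ (p*qt/2) ≤ 1 + b ^ T + a ^ T :=
      aux_mixed hb0 ha0 hκγ0 hs20.le e1
    have t3 : a ^ (κ*γ) * a ^ (p*qt/2) ≤ 1 + a ^ T + b ^ T := by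
      rw [← Real.rpow_add' ha0 hsum.ne']
      exact aux_one_var ha0 hb0 hsum.le e1
    have t4 : b ^ (κ*γ) * b ^ (p*qt/2) ≤ 1 + b ^ T + a ^ T := by
      rw [← Real.rpow_add' hb0 hsum.ne']
      exact aux_one_var hb0 ha0 hsum.le e1
    have t5 : a ^ (κ*γ) ≤ 1 + a ^ T + b ^ T := aux_one_var ha0 hb0 hκγ0 eκ
    have t6 : b ^ (κ*γ) ≤ 1 + b ^ T + a ^ T := aux_one_var hb0 ha0 hκγ0 eκ
    have t7 : a ^ (p*qt/2) ≤ 1 + a ^ T + b ^ T := aux_one_var ha0 hb0 hs20.le es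
    have t8 : b ^ (p*qt/2) ≤ 1 + b ^ T + a ^ T := aux_one_var hb0 ha0 hs20.le es
    have t9 : (1:ℝ) ≤ 1 + a ^ T + b ^ T := by
      have := Real.rpow_nonneg ha0 T
      have := Real.rpow_nonneg hb0 T
      linarith
    calc (1 + a ^ (κ*γ) + b ^ (κ*γ)) * (1 + a ^ (p*qt/2) + b ^ (p*qt/2))
        = 1 + (a ^ (p*qt/2) + b ^ (p*qt/2) + a ^ (κ*γ) +
            a ^ (κ*γ) * a ^ (p*qt/2) + a ^ (κ*γ) * b ^ (p*qt/2) + b ^ (κ*γ) +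
            b ^ (κ*γ) * a ^ (p*qt/2) + b ^ (κ*γ) * b ^ (p*qt/2)) := by ring
      _ ≤ 9 * (1 + a ^ T + b ^ T) := by linarith
  -- conclusion
  refine hfinal1.trans ?_
  rw [hCN]
  have hHW : H ≤ W + H := by linarith
  calc R ≤ H * ((max 1 L₄ * (c ^ γ * ((1 + a ^ (κ*γ) + b ^ (κ*γ)) * r ^ γ))) *
        ((1 + 2*E₀) ^ ((1:ℝ)/2) * (1 + a ^ (p*qt/2) + b ^ (p*qt/2)))) := by
        rw [hRdef]
        refine mul_le_mul_of_nonneg_left ?_ hH0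
        exact mul_le_mul hDγ hV (Real.rpow_nonneg (by positivity) _) (by positivity)
    _ = (max 1 L₄ * (1 + 2*E₀) ^ ((1:ℝ)/2)) * (c ^ γ * r ^ γ) *
        (H * ((1 + a ^ (κ*γ) + b ^ (κ*γ)) * (1 + a ^ (p*qt/2) + b ^ (p*qt/2)))) := by ring
    _ ≤ (max 1 L₄ * (1 + 2*E₀) ^ ((1:ℝ)/2)) * (c ^ γ * r ^ γ) *
        ((W + H) * (9 * (1 + a ^ T + b ^ T))) := by
        refine mul_le_mul_of_nonneg_left ?_ (by positivity)
        exact mul_le_mul hHW hprod (by positivity) (by linarith)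
    _ = 9 * max 1 L₄ * (1 + 2*E₀) ^ ((1:ℝ)/2) * (W + H) * c ^ γ *
        (1 + a ^ T + b ^ T) * r ^ γ := by ring
end PaperProb
end
end

section
/- Under Assumptions 1–3, there exists a constant K, independent of the admissible step size Δ = (h,τ), such that W₂(μ, μ^Δ) ≤ K·|Δ^α| for every admissible Δ, where |Δ^α| := h^{α₁}+τ^{α₂} and μ^Δ is regarded as a probability measure on E. -/
open MeasureTheory Filter Set Topology ENNReal
noncomputable section

namespace PaperProb

variable {E Ω : Type*}

/-! ### auxiliary lemmas for Statement 10 -/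

section AuxS10

private lemma min_one_sq_nonneg' (y : ℝ) : 0 ≤ min 1 (y ^ 2) :=
  le_min zero_le_one (sq_nonneg y)

private lemma min_sq_triple {a b c d : ℝ} (ha : 0 ≤ a) (hb : 0 ≤ b) (hc : 0 ≤ c)
    (hd : 0 ≤ d) (h : d ≤ a + b + c) :
    min 1 (d ^ 2) ≤ 3 * min 1 (a ^ 2) + 3 * min 1 (b ^ 2) + 3 * min 1 (c ^ 2) := by
  rcases le_or_gt 1 a with h1 | h1
  · have e1 : min 1 (a ^ 2) = 1 := min_eq_left (by nlinarith)
    have h2 := min_le_left (1 : ℝ) (d ^ 2)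
    nlinarith [min_one_sq_nonneg' b, min_one_sq_nonneg' c]
  rcases le_or_gt 1 b with h2 | h2
  · have e1 : min 1 (b ^ 2) = 1 := min_eq_left (by nlinarith)
    have h3 := min_le_left (1 : ℝ) (d ^ 2)
    nlinarith [min_one_sq_nonneg' a, min_one_sq_nonneg' c]
  rcases le_or_gt 1 c with h3 | h3
  · have e1 : min 1 (c ^ 2) = 1 := min_eq_left (by nlinarith)
    have h4 := min_le_left (1 : ℝ) (d ^ 2)
    nlinarith [min_one_sq_nonneg' a, min_one_sq_nonneg' b]
  · have h4 := min_le_right (1 : ℝ) (d ^ 2)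
    have ea : min 1 (a ^ 2) = a ^ 2 := min_eq_right (by nlinarith)
    have eb : min 1 (b ^ 2) = b ^ 2 := min_eq_right (by nlinarith)
    have ec : min 1 (c ^ 2) = c ^ 2 := min_eq_right (by nlinarith)
    rw [ea, eb, ec]
    nlinarith [sq_nonneg (a - b), sq_nonneg (b - c), sq_nonneg (a - c)]

private lemma norm_sub_le₃ {E : Type*} [NormedAddCommGroup E] (u₁ u₂ u₃ u₄ : E) :
    ‖u₁ - u₄‖ ≤ ‖u₁ - u₂‖ + ‖u₂ - u₃‖ + ‖u₃ - u₄‖ := by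
  have h : u₁ - u₄ = u₁ - u₂ + (u₂ - u₃) + (u₃ - u₄) := by abel
  rw [h]
  exact le_trans (norm_add_le _ _) (add_le_add (norm_add_le _ _) le_rfl)

private lemma lint_min_one_sq {E Ω : Type*} [NormedAddCommGroup E] [MeasurableSpace Ω]
    (ℙ : Measure Ω) [IsProbabilityMeasure ℙ] (Z : Ω → E) {R : ℝ} (hR : 0 ≤ R)
    (h : (∫⁻ ω, (‖Z ω‖₊ : ℝ≥0∞) ^ (2 : ℝ) ∂ℙ) ^ ((1 : ℝ) / 2) ≤ ENNReal.ofReal R) :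
    ∫⁻ ω, ENNReal.ofReal (min 1 (‖Z ω‖ ^ 2)) ∂ℙ ≤ ENNReal.ofReal (min 1 (R ^ 2)) := by
  have h2 : ∫⁻ ω, (‖Z ω‖₊ : ℝ≥0∞) ^ (2 : ℝ) ∂ℙ ≤ ENNReal.ofReal (R ^ 2) := by
    have h3 := ENNReal.rpow_le_rpow h (le_of_lt two_pos)
    rwa [← ENNReal.rpow_mul, one_div, inv_mul_cancel₀ (by norm_num : (2 : ℝ) ≠ 0),
      ENNReal.rpow_one, ENNReal.ofReal_rpow_of_nonneg hR (le_of_lt two_pos),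
      show (R : ℝ) ^ (2 : ℝ) = R ^ 2 by rw [← Real.rpow_natCast R 2]; norm_num] at h3
  have key : ∫⁻ ω, ENNReal.ofReal (min 1 (‖Z ω‖ ^ 2)) ∂ℙ
      ≤ min 1 (ENNReal.ofReal (R ^ 2)) := by
    refine le_min ?_ ?_
    · calc ∫⁻ ω, ENNReal.ofReal (min 1 (‖Z ω‖ ^ 2)) ∂ℙ
          ≤ ∫⁻ _, 1 ∂ℙ := lintegral_mono fun ω => by
            simpa using ENNReal.ofReal_le_ofReal (min_le_left _ _)
        _ = 1 := by simp
    · calc ∫⁻ ω, ENNReal.ofReal (min 1 (‖Z ω‖ ^ 2)) ∂ℙ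
          ≤ ∫⁻ ω, (‖Z ω‖₊ : ℝ≥0∞) ^ (2 : ℝ) ∂ℙ := by
            refine lintegral_mono fun ω => ?_
            have e : ((‖Z ω‖₊ : ℝ≥0∞)) ^ (2 : ℝ) = ENNReal.ofReal (‖Z ω‖ ^ 2) := by
              rw [← enorm_eq_nnnorm, ← ofReal_norm,
                ENNReal.ofReal_rpow_of_nonneg (norm_nonneg _) (by norm_num),
                show (‖Z ω‖ : ℝ) ^ (2 : ℝ) = ‖Z ω‖ ^ 2 by
                  rw [← Real.rpow_natCast (‖Z ω‖) 2]; norm_num]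
            rw [e]
            exact ENNReal.ofReal_le_ofReal (min_le_right _ _)
        _ ≤ ENNReal.ofReal (R ^ 2) := h2
  have hmono : Monotone ENNReal.ofReal := fun _ _ hxy => ENNReal.ofReal_le_ofReal hxy
  calc ∫⁻ ω, ENNReal.ofReal (min 1 (‖Z ω‖ ^ 2)) ∂ℙ
      ≤ min 1 (ENNReal.ofReal (R ^ 2)) := key
    _ = ENNReal.ofReal (min 1 (R ^ 2)) := by rw [hmono.map_min]; simp

private lemma map_eq_of_integral_eq {E Ω : Type*} [MeasurableSpace E] [MeasurableSpace Ω]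
    (μ : Measure E) (ℙ : Measure Ω) [IsProbabilityMeasure μ] [IsProbabilityMeasure ℙ]
    {g : E × Ω → E} (hg : Measurable g)
    (hinv : ∀ f : E → ℝ, Measurable f → Bdd f →
      ∫ u, ∫ ω, f (g (u, ω)) ∂ℙ ∂μ = ∫ u, f u ∂μ) :
    (μ.prod ℙ).map g = μ := by
  ext s hs
  rw [Measure.map_apply hg hs, Measure.prod_apply (hg hs)]
  have hmeas : Measurable fun u => ℙ (Prod.mk u ⁻¹' (g ⁻¹' s)) :=
    measurable_measure_prodMk_left (hg hs)
  have hle1 : ∀ u, ℙ (Prod.mk u ⁻¹' (g ⁻¹' s)) ≤ 1 := fun u => prob_le_one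
  have hBdd : Bdd (s.indicator (fun _ : E => (1 : ℝ))) := ⟨1, fun u => by
    by_cases h : u ∈ s <;> simp [Set.indicator_apply, h]⟩
  have key := hinv (s.indicator fun _ => (1 : ℝ)) (measurable_const.indicator hs) hBdd
  have hinner : ∀ u, ∫ ω, s.indicator (fun _ => (1 : ℝ)) (g (u, ω)) ∂ℙ
      = (ℙ (Prod.mk u ⁻¹' (g ⁻¹' s))).toReal := by
    intro u
    have hpt : ∀ ω, s.indicator (fun _ => (1 : ℝ)) (g (u, ω))
        = (Prod.mk u ⁻¹' (g ⁻¹' s)).indicator (fun _ => (1 : ℝ)) ω := by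
      intro ω; by_cases h : g (u, ω) ∈ s <;>
        simp [Set.indicator_apply, h, Set.mem_preimage]
    rw [integral_congr_ae (Filter.Eventually.of_forall hpt),
      integral_indicator_const (1 : ℝ) (measurable_prodMk_left (hg hs))]
    simp [measureReal_def]
  simp_rw [hinner] at key
  rw [integral_indicator_const (1 : ℝ) hs] at key
  simp only [smul_eq_mul, mul_one] at key
  have hfin : ∫⁻ u, ℙ (Prod.mk u ⁻¹' (g ⁻¹' s)) ∂μ ≠ ⊤ := by
    refine ne_top_of_le_ne_top (by simp : (1 : ℝ≥0∞) ≠ ⊤) ?_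
    calc ∫⁻ u, ℙ (Prod.mk u ⁻¹' (g ⁻¹' s)) ∂μ ≤ ∫⁻ _, 1 ∂μ := lintegral_mono hle1
      _ = 1 := by simp
  rw [integral_toReal hmeas.aemeasurable
    (Filter.Eventually.of_forall fun u => lt_of_le_of_lt (hle1 u) ENNReal.one_lt_top)] at key
  exact (ENNReal.toReal_eq_toReal_iff' hfin (measure_ne_top μ s)).mp key

private lemma map_proj_fst {E Ω : Type*} [MeasurableSpace E] [MeasurableSpace Ω]
    (μ ν : Measure E) (ℙ : Measure Ω) [IsProbabilityMeasure μ] [IsProbabilityMeasure ν]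
    [IsProbabilityMeasure ℙ] :
    ((μ.prod ν).prod ℙ).map (Prod.map Prod.fst (id : Ω → Ω)) = μ.prod ℙ := by
  rw [← Measure.map_prod_map _ _ measurable_fst measurable_id, Measure.map_id,
    Measure.map_fst_prod]
  simp

private lemma map_proj_snd {E Ω : Type*} [MeasurableSpace E] [MeasurableSpace Ω]
    (μ ν : Measure E) (ℙ : Measure Ω) [IsProbabilityMeasure μ] [IsProbabilityMeasure ν]
    [IsProbabilityMeasure ℙ] :
    ((μ.prod ν).prod ℙ).map (Prod.map Prod.snd (id : Ω → Ω)) = ν.prod ℙ := by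
  rw [← Measure.map_prod_map _ _ measurable_snd measurable_id, Measure.map_id,
    Measure.map_snd_prod]
  simp

end AuxS10

set_option maxHeartbeats 2000000 in
/-- convergence of the numerical invariant measure in the bounded
Wasserstein distance: `W₂(μ, μ^Δ) ≤ K·|Δ^α| = K(h^{α₁}+τ^{α₂})`, with `K`
independent of the admissible step size. -/
theorem statement10
    {E Ω : Type*} [NormedAddCommGroup E] [NormedSpace ℝ E] [CompleteSpace E]
    [SecondCountableTopology E] [MeasurableSpace E] [BorelSpace E]
    {mΩ : MeasurableSpace Ω} (ℙ : Measure Ω) (ℱ : Filtration ℝ mΩ)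
    (X : E → ℝ → Ω → E) (r rt γ₁ β L₁ L₂ : ℝ) (ρ : ℝ → ℝ)
    (Eh : ℝ → Set E) (Y : ℝ × ℝ → E → ℕ → Ω → E)
    (ht τt q qt γ₂ κ L₃ L₄ : ℝ) (ρD : ℝ × ℝ → ℝ → ℝ)
    (x : E) (xh : ℝ → E) (α₁ α₂ L₅ : ℝ)
    (hA1 : Assumption1 ℙ ℱ X r rt γ₁ β L₁ L₂ ρ)
    (hA2 : Assumption2 ℙ ℱ Eh Y ht τt q qt γ₂ κ L₃ L₄ ρD)
    (hA3 : Assumption3 ℙ X Y Eh ht τt rt qt x xh α₁ α₂ L₅)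
    (μ : Measure E) (hμ : IsInvMeasure ℙ X μ)
    (μD : ℝ × ℝ → Measure E)
    (hμD : ∀ Δ, Adm ht τt Δ → IsInvMeasureD ℙ Y (Eh Δ.1) Δ (μD Δ)) :
    ∃ K > (0 : ℝ), ∀ Δ, Adm ht τt Δ →
      W2 μ (μD Δ) ≤ K * (Δ.1 ^ α₁ + Δ.2 ^ α₂) := by
  classical
  haveI iℙ : IsProbabilityMeasure ℙ := hA1.prob
  haveI iμ : IsProbabilityMeasure μ := hμ.1
  have hL₅ := hA3.hL₅
  have hMx0' : (0:ℝ) < 1 + ‖x‖ ^ (max rt qt) := by positivity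
  refine ⟨2 * L₅ * (1 + ‖x‖ ^ (max rt qt)), by positivity, ?_⟩
  intro Δ hΔ
  obtain ⟨⟨hh0, hhht⟩, hτ0, hττt⟩ := id hΔ
  obtain ⟨iνP, hνnull, hνinv⟩ := hμD Δ hΔ
  haveI := iνP
  have hτ1 : Δ.2 ≤ 1 := le_trans hττt hA2.hτt.2
  -- a sequence of times going to infinity along which ρ tends to 0
  have hex : ∀ n : ℕ, ∃ s : ℝ, (n : ℝ) ≤ s ∧ ρ s ≤ 1 / ((n : ℝ) + 1) := by
    intro n
    by_contra hcon
    push_neg at hcon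
    have hInt : IntegrableOn (fun s => ρ s ^ γ₁) (Set.Ici (n : ℝ)) volume :=
      hA1.ρ_int.mono_set (Set.Ici_subset_Ici.mpr (Nat.cast_nonneg n))
    have hpos : (0:ℝ) < 1 / ((n : ℝ) + 1) := by positivity
    have hγ₁0 : (0:ℝ) < γ₁ := hA1.hγ₁.1
    have hconst : IntegrableOn (fun _ : ℝ => (1 / ((n : ℝ) + 1)) ^ γ₁)
        (Set.Ici (n : ℝ)) volume := by
      refine Integrable.mono' hInt aestronglyMeasurable_const ?_
      filter_upwards [ae_restrict_mem measurableSet_Ici] with s hsmem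
      rw [Real.norm_eq_abs, abs_of_nonneg (Real.rpow_nonneg hpos.le _)]
      exact Real.rpow_le_rpow hpos.le (hcon s hsmem).le hγ₁0.le
    rw [integrableOn_const_iff enorm_ne_top] at hconst
    rcases hconst with hc | hc
    · exact absurd (enorm_eq_zero.mp hc) (ne_of_gt (Real.rpow_pos_of_pos hpos _))
    · simp [Real.volume_Ici] at hc
  choose t htge hρt using hex
  have ht0 : ∀ n, (0:ℝ) ≤ t n := fun n => le_trans (Nat.cast_nonneg n) (htge n)
  have hρ_tend : Tendsto (fun n => ρ (t n)) atTop (𝓝 0) :=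
    squeeze_zero (fun n => hA1.ρ_nonneg _) hρt tendsto_one_div_add_atTop_nhds_zero_nat
  -- floor indices tend to infinity
  have hkge : ∀ n : ℕ, n ≤ ⌊t n / Δ.2⌋₊ := by
    intro n
    refine Nat.le_floor ?_
    have h1 : t n ≤ t n / Δ.2 := by
      rw [le_div_iff₀ hτ0]
      exact mul_le_of_le_one_right (ht0 n) hτ1
    exact le_trans (htge n) h1
  have hk_tend : Tendsto (fun n => ⌊t n / Δ.2⌋₊) atTop atTop :=
    tendsto_atTop_mono hkge tendsto_id
  obtain ⟨B0, hB0⟩ := hA2.ρD_sum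
  have hγ₂0 : (0:ℝ) < γ₂ := hA2.hγ₂.1
  have hsD_tend : Tendsto (fun n : ℕ => ρD Δ ((⌊t n / Δ.2⌋₊ : ℝ) * Δ.2)) atTop (𝓝 0) := by
    have hγ := ((hB0 Δ hΔ).1.tendsto_atTop_zero).comp hk_tend
    have hcont := (Real.continuousAt_rpow_const 0 (1/γ₂) (Or.inr (by positivity))).tendsto
    have h2 := hcont.comp hγ
    rw [Real.zero_rpow (ne_of_gt (by positivity : (0:ℝ) < 1/γ₂))] at h2
    refine h2.congr fun n => ?_
    show (ρD Δ ((⌊t n / Δ.2⌋₊ : ℝ) * Δ.2) ^ γ₂) ^ (1/γ₂) = _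
    rw [← Real.rpow_mul (hA2.ρD_nonneg _ _), mul_one_div_cancel (ne_of_gt hγ₂0),
      Real.rpow_one]
  -- continuity facts
  have hβ0 : (0:ℝ) ≤ β := hA1.hβ.1
  have hκ0 : (0:ℝ) ≤ κ := hA2.hκ.1
  have hcontβ : Continuous fun u : E => ‖u‖ ^ β :=
    continuous_norm.rpow_const fun u => Or.inr hβ0
  have hcontκ : Continuous fun u : E => ‖u‖ ^ κ :=
    continuous_norm.rpow_const fun u => Or.inr hκ0
  -- a.e. membership in Eh
  obtain ⟨N, hNsub, hNmeas, hNnull⟩ := exists_measurable_superset_of_null hνnull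
  have haeEh : ∀ᵐ uv ∂(μ.prod (μD Δ)), uv.2 ∈ Eh Δ.1 := by
    rw [ae_iff]
    refine measure_mono_null (fun uv huv => ?_) (?_ : (μ.prod (μD Δ)) (Set.univ ×ˢ N) = 0)
    · exact Set.mem_prod.mpr ⟨Set.mem_univ _, hNsub huv⟩
    · rw [Measure.prod_prod, hNnull, mul_zero]
  have hxhmem : xh Δ.1 ∈ Eh Δ.1 := hA3.xh_mem Δ.1 ⟨hh0, hhht⟩
  -- marginals
  have hXmeas : ∀ s : ℝ, Measurable fun p : E × Ω => X p.1 s p.2 := hA1.jmeas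
  have hYmeas : ∀ kk : ℕ, Measurable fun p : E × Ω => Y Δ p.1 kk p.2 := hA2.jmeas Δ
  have margX : ∀ n : ℕ, (μ.prod ℙ).map (fun p : E × Ω => X p.1 (t n) p.2) = μ := by
    intro n
    exact map_eq_of_integral_eq μ ℙ (hXmeas (t n))
      (fun f hf hb => hμ.2 (t n) (ht0 n) f hf hb)
  have margY : ∀ n : ℕ, ((μD Δ).prod ℙ).map
      (fun p : E × Ω => Y Δ p.1 ⌊t n / Δ.2⌋₊ p.2) = μD Δ := by
    intro n
    exact map_eq_of_integral_eq (μD Δ) ℙ (hYmeas _) (fun f hf hb => hνinv _ f hf hb)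
  -- abbreviations
  set Mx : ℝ := 1 + ‖x‖ ^ (max rt qt) with hMx
  set DA : ℝ := Δ.1 ^ α₁ + Δ.2 ^ α₂ with hDAdef
  have hMx0 : (0:ℝ) < Mx := by rw [hMx]; positivity
  have hDA0 : (0:ℝ) < DA := by
    have h1 : 0 < Δ.2 ^ α₂ := Real.rpow_pos_of_pos hτ0 _
    have h2 : 0 ≤ Δ.1 ^ α₁ := Real.rpow_nonneg hh0 _
    rw [hDAdef]; linarith
  have hRb0 : (0:ℝ) ≤ L₅ * Mx * DA :=
    mul_nonneg (mul_nonneg hL₅.le hMx0.le) hDA0.le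
  set A : ℕ → ℝ := fun n => (∫⁻ u, ENNReal.ofReal
      (min 1 ((L₂ * ‖u - x‖ * (1 + ‖u‖ ^ β + ‖x‖ ^ β) * ρ (t n)) ^ 2)) ∂μ).toReal with hAdef
  set C : ℕ → ℝ := fun n => (∫⁻ v, ENNReal.ofReal
      (min 1 ((L₄ * ‖xh Δ.1 - v‖ * (1 + ‖xh Δ.1‖ ^ κ + ‖v‖ ^ κ)
        * ρD Δ ((⌊t n / Δ.2⌋₊ : ℝ) * Δ.2)) ^ 2)) ∂(μD Δ)).toReal with hCdef
  -- the per-n coupling and its cost estimate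
  have costb : ∀ n : ℕ, ∃ πn : Measure (E × E), IsCoupling μ (μD Δ) πn ∧
      (∫ pr : E × E, min 1 (‖pr.1 - pr.2‖ ^ 2) ∂πn)
        ≤ 3 * A n + 3 * min 1 ((L₅ * Mx * DA) ^ 2) + 3 * C n := by
    intro n
    have hΦmeas : Measurable fun p : (E × E) × Ω =>
        (X p.1.1 (t n) p.2, Y Δ p.1.2 ⌊t n / Δ.2⌋₊ p.2) :=
      ((hXmeas (t n)).comp ((measurable_fst.fst).prodMk measurable_snd)).prodMk
        ((hYmeas _).comp ((measurable_fst.snd).prodMk measurable_snd))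
    refine ⟨((μ.prod (μD Δ)).prod ℙ).map
      (fun p : (E × E) × Ω => (X p.1.1 (t n) p.2, Y Δ p.1.2 ⌊t n / Δ.2⌋₊ p.2)),
      ⟨?_, ?_, ?_⟩, ?_⟩
    · exact Measure.isProbabilityMeasure_map hΦmeas.aemeasurable
    · rw [Measure.map_map measurable_fst hΦmeas]
      have hco : (Prod.fst ∘ fun p : (E × E) × Ω =>
            (X p.1.1 (t n) p.2, Y Δ p.1.2 ⌊t n / Δ.2⌋₊ p.2))
          = (fun p : E × Ω => X p.1 (t n) p.2) ∘ (Prod.map Prod.fst (id : Ω → Ω)) := rfl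
      rw [hco, ← Measure.map_map (hXmeas (t n)) (measurable_fst.prodMap measurable_id),
        map_proj_fst, margX n]
    · rw [Measure.map_map measurable_snd hΦmeas]
      have hco : (Prod.snd ∘ fun p : (E × E) × Ω =>
            (X p.1.1 (t n) p.2, Y Δ p.1.2 ⌊t n / Δ.2⌋₊ p.2))
          = (fun p : E × Ω => Y Δ p.1 ⌊t n / Δ.2⌋₊ p.2) ∘ (Prod.map Prod.snd (id : Ω → Ω)) :=
        rfl
      rw [hco, ← Measure.map_map (hYmeas _) (measurable_snd.prodMap measurable_id),
        map_proj_snd, margY n]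
    · -- cost estimate
      have hcmeas : Measurable fun pr : E × E => min 1 (‖pr.1 - pr.2‖ ^ 2) :=
        measurable_const.min (((measurable_fst.sub measurable_snd).norm).pow_const 2)
      rw [integral_eq_lintegral_of_nonneg_ae
        (f := fun pr : E × E => min 1 (‖pr.1 - pr.2‖ ^ 2))
        (Filter.Eventually.of_forall fun pr => min_one_sq_nonneg' (‖pr.1 - pr.2‖))
        hcmeas.aestronglyMeasurable,
        lintegral_map hcmeas.ennreal_ofReal hΦmeas]
      have hX1 : Measurable fun p : (E × E) × Ω => X p.1.1 (t n) p.2 :=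
        (hXmeas (t n)).comp ((measurable_fst.fst).prodMk measurable_snd)
      have hY1 : Measurable fun p : (E × E) × Ω => Y Δ p.1.2 ⌊t n / Δ.2⌋₊ p.2 :=
        (hYmeas _).comp ((measurable_fst.snd).prodMk measurable_snd)
      have hFmeas : Measurable fun p : (E × E) × Ω => ENNReal.ofReal
          (min 1 (‖X p.1.1 (t n) p.2 - Y Δ p.1.2 ⌊t n / Δ.2⌋₊ p.2‖ ^ 2)) :=
        (measurable_const.min (((hX1.sub hY1).norm).pow_const 2)).ennreal_ofReal
      rw [MeasureTheory.lintegral_prod _ hFmeas.aemeasurable]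
      -- the inner a.e. bound
      have hstep : ∀ᵐ uv ∂(μ.prod (μD Δ)),
          (∫⁻ ω, ENNReal.ofReal
            (min 1 (‖X uv.1 (t n) ω - Y Δ uv.2 ⌊t n / Δ.2⌋₊ ω‖ ^ 2)) ∂ℙ)
          ≤ 3 * ENNReal.ofReal (min 1
              ((L₂ * ‖uv.1 - x‖ * (1 + ‖uv.1‖ ^ β + ‖x‖ ^ β) * ρ (t n)) ^ 2))
            + 3 * ENNReal.ofReal (min 1 ((L₅ * Mx * DA) ^ 2))
            + 3 * ENNReal.ofReal (min 1 ((L₄ * ‖xh Δ.1 - uv.2‖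
              * (1 + ‖xh Δ.1‖ ^ κ + ‖uv.2‖ ^ κ)
              * ρD Δ ((⌊t n / Δ.2⌋₊ : ℝ) * Δ.2)) ^ 2)) := by
        filter_upwards [haeEh] with uv hvEh
        have hXu : Measurable fun ω => X uv.1 (t n) ω :=
          (hXmeas (t n)).comp measurable_prodMk_left
        have hXx : Measurable fun ω => X x (t n) ω :=
          (hXmeas (t n)).comp measurable_prodMk_left
        have hYh : Measurable fun ω => Y Δ (xh Δ.1) ⌊t n / Δ.2⌋₊ ω :=
          (hYmeas _).comp measurable_prodMk_left
        have hYv : Measurable fun ω => Y Δ uv.2 ⌊t n / Δ.2⌋₊ ω :=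
          (hYmeas _).comp measurable_prodMk_left
        have hRa0 : 0 ≤ L₂ * ‖uv.1 - x‖ * (1 + ‖uv.1‖ ^ β + ‖x‖ ^ β) * ρ (t n) :=
          mul_nonneg (mul_nonneg (mul_nonneg hA1.hL₂.le (norm_nonneg _)) (by positivity))
            (hA1.ρ_nonneg _)
        have hRc0 : 0 ≤ L₄ * ‖xh Δ.1 - uv.2‖ * (1 + ‖xh Δ.1‖ ^ κ + ‖uv.2‖ ^ κ)
            * ρD Δ ((⌊t n / Δ.2⌋₊ : ℝ) * Δ.2) :=
          mul_nonneg (mul_nonneg (mul_nonneg hA2.hL₄.le (norm_nonneg _)) (by positivity))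
            (hA2.ρD_nonneg _ _)
        have bA := lint_min_one_sq ℙ (fun ω => X uv.1 (t n) ω - X x (t n) ω) hRa0
          (hA1.contract uv.1 x (t n) (ht0 n))
        have bB := lint_min_one_sq ℙ
          (fun ω => X x (t n) ω - Y Δ (xh Δ.1) ⌊t n / Δ.2⌋₊ ω) hRb0
          (by rw [hMx, hDAdef]; exact hA3.conv Δ hΔ (t n) (ht0 n))
        have bC := lint_min_one_sq ℙ
          (fun ω => Y Δ (xh Δ.1) ⌊t n / Δ.2⌋₊ ω - Y Δ uv.2 ⌊t n / Δ.2⌋₊ ω) hRc0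
          (hA2.contract Δ hΔ (xh Δ.1) hxhmem uv.2 hvEh ⌊t n / Δ.2⌋₊)
        have hm1 : Measurable fun ω => ENNReal.ofReal
            (3 * min 1 (‖X uv.1 (t n) ω - X x (t n) ω‖ ^ 2)) :=
          ((measurable_const.min (((hXu.sub hXx).norm).pow_const 2)).const_mul
            3).ennreal_ofReal
        have hm2 : Measurable fun ω => ENNReal.ofReal
            (3 * min 1 (‖X x (t n) ω - Y Δ (xh Δ.1) ⌊t n / Δ.2⌋₊ ω‖ ^ 2)) :=
          ((measurable_const.min (((hXx.sub hYh).norm).pow_const 2)).const_mul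
            3).ennreal_ofReal
        have hm3 : Measurable fun ω => ENNReal.ofReal
            (3 * min 1 (‖Y Δ (xh Δ.1) ⌊t n / Δ.2⌋₊ ω - Y Δ uv.2 ⌊t n / Δ.2⌋₊ ω‖ ^ 2)) :=
          ((measurable_const.min (((hYh.sub hYv).norm).pow_const 2)).const_mul
            3).ennreal_ofReal
        have e3 : ∀ (f : Ω → ℝ), Measurable f →
            ∫⁻ ω, ENNReal.ofReal (3 * f ω) ∂ℙ = 3 * ∫⁻ ω, ENNReal.ofReal (f ω) ∂ℙ := by
          intro f hf
          simp_rw [ENNReal.ofReal_mul (by norm_num : (0:ℝ) ≤ 3)]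
          rw [lintegral_const_mul _ hf.ennreal_ofReal]
          norm_num
        calc ∫⁻ ω, ENNReal.ofReal
              (min 1 (‖X uv.1 (t n) ω - Y Δ uv.2 ⌊t n / Δ.2⌋₊ ω‖ ^ 2)) ∂ℙ
            ≤ ∫⁻ ω, (ENNReal.ofReal
                  (3 * min 1 (‖X uv.1 (t n) ω - X x (t n) ω‖ ^ 2))
                + ENNReal.ofReal
                  (3 * min 1 (‖X x (t n) ω - Y Δ (xh Δ.1) ⌊t n / Δ.2⌋₊ ω‖ ^ 2))
                + ENNReal.ofReal (3 * min 1
                  (‖Y Δ (xh Δ.1) ⌊t n / Δ.2⌋₊ ω - Y Δ uv.2 ⌊t n / Δ.2⌋₊ ω‖ ^ 2))) ∂ℙ := by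
              refine lintegral_mono fun ω => ?_
              rw [← ENNReal.ofReal_add (mul_nonneg (by norm_num) (min_one_sq_nonneg' _))
                (mul_nonneg (by norm_num) (min_one_sq_nonneg' _)),
                ← ENNReal.ofReal_add (add_nonneg
                  (mul_nonneg (by norm_num) (min_one_sq_nonneg' _))
                  (mul_nonneg (by norm_num) (min_one_sq_nonneg' _)))
                (mul_nonneg (by norm_num) (min_one_sq_nonneg' _))]
              refine ENNReal.ofReal_le_ofReal ?_
              exact min_sq_triple (norm_nonneg _) (norm_nonneg _) (norm_nonneg _)
                (norm_nonneg _) (norm_sub_le₃ _ _ _ _)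
          _ = (∫⁻ ω, ENNReal.ofReal
                  (3 * min 1 (‖X uv.1 (t n) ω - X x (t n) ω‖ ^ 2)) ∂ℙ)
              + (∫⁻ ω, ENNReal.ofReal
                  (3 * min 1 (‖X x (t n) ω - Y Δ (xh Δ.1) ⌊t n / Δ.2⌋₊ ω‖ ^ 2)) ∂ℙ)
              + (∫⁻ ω, ENNReal.ofReal (3 * min 1
                  (‖Y Δ (xh Δ.1) ⌊t n / Δ.2⌋₊ ω - Y Δ uv.2 ⌊t n / Δ.2⌋₊ ω‖ ^ 2)) ∂ℙ) := by
              rw [lintegral_add_right _ hm3, lintegral_add_left hm1]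
          _ ≤ 3 * ENNReal.ofReal (min 1
                ((L₂ * ‖uv.1 - x‖ * (1 + ‖uv.1‖ ^ β + ‖x‖ ^ β) * ρ (t n)) ^ 2))
              + 3 * ENNReal.ofReal (min 1 ((L₅ * Mx * DA) ^ 2))
              + 3 * ENNReal.ofReal (min 1 ((L₄ * ‖xh Δ.1 - uv.2‖
                * (1 + ‖xh Δ.1‖ ^ κ + ‖uv.2‖ ^ κ)
                * ρD Δ ((⌊t n / Δ.2⌋₊ : ℝ) * Δ.2)) ^ 2)) := by
              rw [e3 (fun ω => min 1 (‖X uv.1 (t n) ω - X x (t n) ω‖ ^ 2))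
                  (measurable_const.min (((hXu.sub hXx).norm).pow_const 2)),
                e3 (fun ω => min 1 (‖X x (t n) ω - Y Δ (xh Δ.1) ⌊t n / Δ.2⌋₊ ω‖ ^ 2))
                  (measurable_const.min (((hXx.sub hYh).norm).pow_const 2)),
                e3 (fun ω => min 1
                    (‖Y Δ (xh Δ.1) ⌊t n / Δ.2⌋₊ ω - Y Δ uv.2 ⌊t n / Δ.2⌋₊ ω‖ ^ 2))
                  (measurable_const.min (((hYh.sub hYv).norm).pow_const 2))]
              exact add_le_add (add_le_add (mul_le_mul_right bA 3) (mul_le_mul_right bB 3))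
                (mul_le_mul_right bC 3)
      -- integrate the bound over μ × μD
      have hg1 : Measurable fun u : E => ENNReal.ofReal
          (min 1 ((L₂ * ‖u - x‖ * (1 + ‖u‖ ^ β + ‖x‖ ^ β) * ρ (t n)) ^ 2)) := by
        have hcont : Continuous fun u : E =>
            L₂ * ‖u - x‖ * (1 + ‖u‖ ^ β + ‖x‖ ^ β) * ρ (t n) :=
          ((continuous_const.mul ((continuous_id.sub continuous_const).norm)).mul
            ((continuous_const.add hcontβ).add continuous_const)).mul continuous_const
        exact ((continuous_const.min (hcont.pow 2)).measurable).ennreal_ofReal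
      have hg3 : Measurable fun v : E => ENNReal.ofReal
          (min 1 ((L₄ * ‖xh Δ.1 - v‖ * (1 + ‖xh Δ.1‖ ^ κ + ‖v‖ ^ κ)
            * ρD Δ ((⌊t n / Δ.2⌋₊ : ℝ) * Δ.2)) ^ 2)) := by
        have hcont : Continuous fun v : E => L₄ * ‖xh Δ.1 - v‖
            * (1 + ‖xh Δ.1‖ ^ κ + ‖v‖ ^ κ) * ρD Δ ((⌊t n / Δ.2⌋₊ : ℝ) * Δ.2) :=
          ((continuous_const.mul ((continuous_const.sub continuous_id).norm)).mul
            (continuous_const.add hcontκ)).mul continuous_const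
        exact ((continuous_const.min (hcont.pow 2)).measurable).ennreal_ofReal
      have hsplit : ∫⁻ uv, (3 * ENNReal.ofReal (min 1
              ((L₂ * ‖uv.1 - x‖ * (1 + ‖uv.1‖ ^ β + ‖x‖ ^ β) * ρ (t n)) ^ 2))
            + 3 * ENNReal.ofReal (min 1 ((L₅ * Mx * DA) ^ 2))
            + 3 * ENNReal.ofReal (min 1 ((L₄ * ‖xh Δ.1 - uv.2‖
              * (1 + ‖xh Δ.1‖ ^ κ + ‖uv.2‖ ^ κ)
              * ρD Δ ((⌊t n / Δ.2⌋₊ : ℝ) * Δ.2)) ^ 2))) ∂(μ.prod (μD Δ))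
          = 3 * (∫⁻ u, ENNReal.ofReal
              (min 1 ((L₂ * ‖u - x‖ * (1 + ‖u‖ ^ β + ‖x‖ ^ β) * ρ (t n)) ^ 2)) ∂μ)
            + 3 * ENNReal.ofReal (min 1 ((L₅ * Mx * DA) ^ 2))
            + 3 * (∫⁻ v, ENNReal.ofReal (min 1 ((L₄ * ‖xh Δ.1 - v‖
              * (1 + ‖xh Δ.1‖ ^ κ + ‖v‖ ^ κ)
              * ρD Δ ((⌊t n / Δ.2⌋₊ : ℝ) * Δ.2)) ^ 2)) ∂(μD Δ)) := by
        have hG1 : Measurable fun uv : E × E => ENNReal.ofReal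
            (min 1 ((L₂ * ‖uv.1 - x‖ * (1 + ‖uv.1‖ ^ β + ‖x‖ ^ β) * ρ (t n)) ^ 2)) :=
          hg1.comp measurable_fst
        have hG3 : Measurable fun uv : E × E => ENNReal.ofReal
            (min 1 ((L₄ * ‖xh Δ.1 - uv.2‖ * (1 + ‖xh Δ.1‖ ^ κ + ‖uv.2‖ ^ κ)
              * ρD Δ ((⌊t n / Δ.2⌋₊ : ℝ) * Δ.2)) ^ 2)) :=
          hg3.comp measurable_snd
        rw [lintegral_add_right _ (hG3.const_mul 3),
          lintegral_add_left (hG1.const_mul 3),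
          lintegral_const_mul _ hG1, lintegral_const_mul _ hG3, lintegral_const]
        have hfst : ∫⁻ uv, ENNReal.ofReal (min 1 ((L₂ * ‖uv.1 - x‖
              * (1 + ‖uv.1‖ ^ β + ‖x‖ ^ β) * ρ (t n)) ^ 2)) ∂(μ.prod (μD Δ))
            = ∫⁻ u, ENNReal.ofReal
              (min 1 ((L₂ * ‖u - x‖ * (1 + ‖u‖ ^ β + ‖x‖ ^ β) * ρ (t n)) ^ 2)) ∂μ := by
          rw [MeasureTheory.lintegral_prod _ hG1.aemeasurable]
          simp
        have hsnd : ∫⁻ uv, ENNReal.ofReal (min 1 ((L₄ * ‖xh Δ.1 - uv.2‖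
              * (1 + ‖xh Δ.1‖ ^ κ + ‖uv.2‖ ^ κ)
              * ρD Δ ((⌊t n / Δ.2⌋₊ : ℝ) * Δ.2)) ^ 2)) ∂(μ.prod (μD Δ))
            = ∫⁻ v, ENNReal.ofReal (min 1 ((L₄ * ‖xh Δ.1 - v‖
              * (1 + ‖xh Δ.1‖ ^ κ + ‖v‖ ^ κ)
              * ρD Δ ((⌊t n / Δ.2⌋₊ : ℝ) * Δ.2)) ^ 2)) ∂(μD Δ) := by
          rw [MeasureTheory.lintegral_prod _ hG3.aemeasurable]
          simp
        rw [hfst, hsnd]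
        simp [measure_univ]
      have hbound : ∫⁻ uv, (∫⁻ ω, ENNReal.ofReal
            (min 1 (‖X uv.1 (t n) ω - Y Δ uv.2 ⌊t n / Δ.2⌋₊ ω‖ ^ 2)) ∂ℙ) ∂(μ.prod (μD Δ))
          ≤ 3 * (∫⁻ u, ENNReal.ofReal
              (min 1 ((L₂ * ‖u - x‖ * (1 + ‖u‖ ^ β + ‖x‖ ^ β) * ρ (t n)) ^ 2)) ∂μ)
            + 3 * ENNReal.ofReal (min 1 ((L₅ * Mx * DA) ^ 2))
            + 3 * (∫⁻ v, ENNReal.ofReal (min 1 ((L₄ * ‖xh Δ.1 - v‖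
              * (1 + ‖xh Δ.1‖ ^ κ + ‖v‖ ^ κ)
              * ρD Δ ((⌊t n / Δ.2⌋₊ : ℝ) * Δ.2)) ^ 2)) ∂(μD Δ)) := by
        rw [← hsplit]
        exact lintegral_mono_ae hstep
      -- pass to real numbers
      have hle1a : (∫⁻ u, ENNReal.ofReal
          (min 1 ((L₂ * ‖u - x‖ * (1 + ‖u‖ ^ β + ‖x‖ ^ β) * ρ (t n)) ^ 2)) ∂μ) ≤ 1 := by
        calc _ ≤ ∫⁻ _, 1 ∂μ := lintegral_mono fun u =>
              le_trans (ENNReal.ofReal_le_ofReal (min_le_left _ _)) (by simp)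
          _ = 1 := by simp
      have hle1c : (∫⁻ v, ENNReal.ofReal (min 1 ((L₄ * ‖xh Δ.1 - v‖
          * (1 + ‖xh Δ.1‖ ^ κ + ‖v‖ ^ κ)
          * ρD Δ ((⌊t n / Δ.2⌋₊ : ℝ) * Δ.2)) ^ 2)) ∂(μD Δ)) ≤ 1 := by
        calc _ ≤ ∫⁻ _, 1 ∂(μD Δ) := lintegral_mono fun v =>
              le_trans (ENNReal.ofReal_le_ofReal (min_le_left _ _)) (by simp)
          _ = 1 := by simp
      have haneT := ne_top_of_le_ne_top ENNReal.one_ne_top hle1a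
      have hcneT := ne_top_of_le_ne_top ENNReal.one_ne_top hle1c
      have h3a : (3:ℝ≥0∞) * _ ≠ ⊤ := ENNReal.mul_ne_top (by simp) haneT
      have h3m : (3:ℝ≥0∞) * ENNReal.ofReal (min 1 ((L₅ * Mx * DA) ^ 2)) ≠ ⊤ :=
        ENNReal.mul_ne_top (by simp) ENNReal.ofReal_ne_top
      have h3c : (3:ℝ≥0∞) * _ ≠ ⊤ := ENNReal.mul_ne_top (by simp) hcneT
      refine le_trans (ENNReal.toReal_mono
        (ENNReal.add_ne_top.mpr ⟨ENNReal.add_ne_top.mpr ⟨h3a, h3m⟩, h3c⟩) hbound)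
        (le_of_eq ?_)
      rw [ENNReal.toReal_add (ENNReal.add_ne_top.mpr ⟨h3a, h3m⟩) h3c,
        ENNReal.toReal_add h3a h3m, ENNReal.toReal_mul, ENNReal.toReal_mul,
        ENNReal.toReal_mul, ENNReal.toReal_ofReal (min_one_sq_nonneg' (L₅ * Mx * DA))]
      rw [hAdef, hCdef]
      norm_num
  -- the infimum is bounded by each coupling's cost
  have hBddB : BddBelow (Set.range fun π : {π : Measure (E × E) // IsCoupling μ (μD Δ) π}
      => ∫ pr : E × E, min 1 (‖pr.1 - pr.2‖ ^ 2) ∂π.1) := by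
    refine ⟨0, ?_⟩
    rintro y ⟨π, rfl⟩
    exact integral_nonneg fun pr => min_one_sq_nonneg' _
  have hI0 : 0 ≤ ⨅ π : {π : Measure (E × E) // IsCoupling μ (μD Δ) π},
      ∫ pr : E × E, min 1 (‖pr.1 - pr.2‖ ^ 2) ∂π.1 :=
    Real.iInf_nonneg fun π => integral_nonneg fun pr => min_one_sq_nonneg' _
  have hIle : ∀ n : ℕ, (⨅ π : {π : Measure (E × E) // IsCoupling μ (μD Δ) π},
      ∫ pr : E × E, min 1 (‖pr.1 - pr.2‖ ^ 2) ∂π.1)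
      ≤ 3 * A n + 3 * min 1 ((L₅ * Mx * DA) ^ 2) + 3 * C n := by
    intro n
    obtain ⟨πn, hπ, hcost⟩ := costb n
    exact le_trans (ciInf_le hBddB ⟨πn, hπ⟩) hcost
  -- limits of A and C
  have hA_tend : Tendsto A atTop (𝓝 0) := by
    have hmeasg : ∀ n : ℕ, Measurable fun u : E => ENNReal.ofReal
        (min 1 ((L₂ * ‖u - x‖ * (1 + ‖u‖ ^ β + ‖x‖ ^ β) * ρ (t n)) ^ 2)) := by
      intro n
      have hcont : Continuous fun u : E =>
          L₂ * ‖u - x‖ * (1 + ‖u‖ ^ β + ‖x‖ ^ β) * ρ (t n) :=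
        ((continuous_const.mul ((continuous_id.sub continuous_const).norm)).mul
          ((continuous_const.add hcontβ).add continuous_const)).mul continuous_const
      exact ((continuous_const.min (hcont.pow 2)).measurable).ennreal_ofReal
    have hbnd : ∀ n : ℕ, ∀ᵐ u ∂μ, ENNReal.ofReal
        (min 1 ((L₂ * ‖u - x‖ * (1 + ‖u‖ ^ β + ‖x‖ ^ β) * ρ (t n)) ^ 2)) ≤ (1:ℝ≥0∞) :=
      fun n => Filter.Eventually.of_forall fun u =>
        le_trans (ENNReal.ofReal_le_ofReal (min_le_left _ _)) (by simp)
    have hpt : ∀ᵐ u ∂μ, Tendsto (fun n => ENNReal.ofReal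
        (min 1 ((L₂ * ‖u - x‖ * (1 + ‖u‖ ^ β + ‖x‖ ^ β) * ρ (t n)) ^ 2))) atTop
        (𝓝 ((fun _ : E => (0:ℝ≥0∞)) u)) := by
      refine Filter.Eventually.of_forall fun u => ?_
      have hc : Continuous fun s : ℝ => ENNReal.ofReal
          (min 1 ((L₂ * ‖u - x‖ * (1 + ‖u‖ ^ β + ‖x‖ ^ β) * s) ^ 2)) :=
        ENNReal.continuous_ofReal.comp
          (continuous_const.min ((continuous_const.mul continuous_id).pow 2))
      have h2 := (hc.tendsto 0).comp hρ_tend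
      simpa [Function.comp_def, min_eq_right (zero_le_one' ℝ)] using h2
    have hlim0 := tendsto_lintegral_of_dominated_convergence (μ := μ)
      (fun _ => (1:ℝ≥0∞)) hmeasg hbnd (by simp) hpt
    simp only [lintegral_zero] at hlim0
    have := (ENNReal.tendsto_toReal (by simp : (0:ℝ≥0∞) ≠ ⊤)).comp hlim0
    simpa [hAdef, Function.comp_def] using this
  have hC_tend : Tendsto C atTop (𝓝 0) := by
    have hmeasg : ∀ n : ℕ, Measurable fun v : E => ENNReal.ofReal
        (min 1 ((L₄ * ‖xh Δ.1 - v‖ * (1 + ‖xh Δ.1‖ ^ κ + ‖v‖ ^ κ)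
          * ρD Δ ((⌊t n / Δ.2⌋₊ : ℝ) * Δ.2)) ^ 2)) := by
      intro n
      have hcont : Continuous fun v : E => L₄ * ‖xh Δ.1 - v‖
          * (1 + ‖xh Δ.1‖ ^ κ + ‖v‖ ^ κ) * ρD Δ ((⌊t n / Δ.2⌋₊ : ℝ) * Δ.2) :=
        ((continuous_const.mul ((continuous_const.sub continuous_id).norm)).mul
          (continuous_const.add hcontκ)).mul continuous_const
      exact ((continuous_const.min (hcont.pow 2)).measurable).ennreal_ofReal
    have hbnd : ∀ n : ℕ, ∀ᵐ v ∂(μD Δ), ENNReal.ofReal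
        (min 1 ((L₄ * ‖xh Δ.1 - v‖ * (1 + ‖xh Δ.1‖ ^ κ + ‖v‖ ^ κ)
          * ρD Δ ((⌊t n / Δ.2⌋₊ : ℝ) * Δ.2)) ^ 2)) ≤ (1:ℝ≥0∞) :=
      fun n => Filter.Eventually.of_forall fun v =>
        le_trans (ENNReal.ofReal_le_ofReal (min_le_left _ _)) (by simp)
    have hpt : ∀ᵐ v ∂(μD Δ), Tendsto (fun n => ENNReal.ofReal
        (min 1 ((L₄ * ‖xh Δ.1 - v‖ * (1 + ‖xh Δ.1‖ ^ κ + ‖v‖ ^ κ)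
          * ρD Δ ((⌊t n / Δ.2⌋₊ : ℝ) * Δ.2)) ^ 2))) atTop
        (𝓝 ((fun _ : E => (0:ℝ≥0∞)) v)) := by
      refine Filter.Eventually.of_forall fun v => ?_
      have hc : Continuous fun s : ℝ => ENNReal.ofReal
          (min 1 ((L₄ * ‖xh Δ.1 - v‖ * (1 + ‖xh Δ.1‖ ^ κ + ‖v‖ ^ κ) * s) ^ 2)) :=
        ENNReal.continuous_ofReal.comp
          (continuous_const.min ((continuous_const.mul continuous_id).pow 2))
      have h2 := (hc.tendsto 0).comp hsD_tend
      simpa [Function.comp_def, min_eq_right (zero_le_one' ℝ)] using h2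
    have hlim0 := tendsto_lintegral_of_dominated_convergence (μ := μD Δ)
      (fun _ => (1:ℝ≥0∞)) hmeasg hbnd (by simp) hpt
    simp only [lintegral_zero] at hlim0
    have := (ENNReal.tendsto_toReal (by simp : (0:ℝ≥0∞) ≠ ⊤)).comp hlim0
    simpa [hCdef, Function.comp_def] using this
  have hlim : Tendsto (fun n => 3 * A n + 3 * min 1 ((L₅ * Mx * DA) ^ 2) + 3 * C n) atTop
      (𝓝 (3 * 0 + 3 * min 1 ((L₅ * Mx * DA) ^ 2) + 3 * 0)) :=
    ((hA_tend.const_mul 3).add tendsto_const_nhds).add (hC_tend.const_mul 3)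
  have hIle' := ge_of_tendsto hlim (Filter.Eventually.of_forall hIle)
  have hIle'' : (⨅ π : {π : Measure (E × E) // IsCoupling μ (μD Δ) π},
      ∫ pr : E × E, min 1 (‖pr.1 - pr.2‖ ^ 2) ∂π.1) ≤ (2 * L₅ * Mx * DA) ^ 2 := by
    have hm := min_le_right (1:ℝ) ((L₅ * Mx * DA) ^ 2)
    nlinarith [hIle', sq_nonneg (L₅ * Mx * DA)]
  have hKDA : (0:ℝ) ≤ 2 * L₅ * Mx * DA := by
    nlinarith [hRb0]
  show (⨅ π : {π : Measure (E × E) // IsCoupling μ (μD Δ) π},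
      ∫ pr : E × E, min 1 (‖pr.1 - pr.2‖ ^ 2) ∂π.1) ^ ((1:ℝ)/2) ≤ 2 * L₅ * Mx * DA
  calc (⨅ π : {π : Measure (E × E) // IsCoupling μ (μD Δ) π},
        ∫ pr : E × E, min 1 (‖pr.1 - pr.2‖ ^ 2) ∂π.1) ^ ((1:ℝ)/2)
      ≤ ((2 * L₅ * Mx * DA) ^ 2) ^ ((1:ℝ)/2) :=
        Real.rpow_le_rpow hI0 hIle'' (by norm_num)
    _ = 2 * L₅ * Mx * DA := by
        rw [← Real.sqrt_eq_rpow, Real.sqrt_sq hKDA]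
end PaperProb
end
end
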